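/- arXiv:2004.12578 — 3 statements merged into one kernel-verified Lean document; each statement's English description precedes it below -/
import Mathlib

section
/- Let K be a bounded subset of L¹(0,∞) satisfying sup_{f∈K} ∫_N^∞ μ(s,f) ds → 0 as N → ∞, and suppose there exists an Orlicz function G with G(t)/t → ∞ as t → ∞ such that sup{∫_0^∞ G(|f|) ds : f ∈ K} < ∞. Then there exists a positive g ∈ L¹(0,∞) such that |f| ≺≺ g for all f ∈ K. -/
open MeasureTheory Set Filter Topology
open scoped ENNReal

/-- An N-function: continuous convex `G : [0,∞) → [0,∞)` with `G 0 = 0`, `G t > 0` for `t > 0`,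
`G t / t → 0` as `t → 0+` and `G t / t → ∞` as `t → ∞`. -/
def IsNFunction (G : ℝ → ℝ) : Prop :=
  ContinuousOn G (Ici 0) ∧ ConvexOn ℝ (Ici 0) G ∧ (∀ t, 0 ≤ t → 0 ≤ G t) ∧ G 0 = 0 ∧
  (∀ t, 0 < t → 0 < G t) ∧
  Tendsto (fun t => G t / t) (𝓝[>] 0) (𝓝 0) ∧
  Tendsto (fun t => G t / t) atTop atTop

/-- An Orlicz function: convex `G : [0,∞) → [0,∞)` with `G 0 = 0`, continuous at `0`,
and not identically zero. -/
def IsOrliczFunction (G : ℝ → ℝ) : Prop :=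
  ConvexOn ℝ (Ici 0) G ∧ (∀ t, 0 ≤ t → 0 ≤ G t) ∧ G 0 = 0 ∧
  ContinuousWithinAt G (Ici 0) 0 ∧ ∃ t, 0 ≤ t ∧ G t ≠ 0

/-- Decreasing rearrangement of `|f|` with respect to Lebesgue measure on `(0,1)`. -/
noncomputable def mu01 (f : ℝ → ℝ) (t : ℝ) : ℝ :=
  sInf {s : ℝ | 0 ≤ s ∧ volume {x | x ∈ Ioo (0:ℝ) 1 ∧ s < |f x|} ≤ ENNReal.ofReal t}

/-- Decreasing rearrangement of `|f|` with respect to Lebesgue measure on `(0,∞)`. -/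
noncomputable def muInf (f : ℝ → ℝ) (t : ℝ) : ℝ :=
  sInf {s : ℝ | 0 ≤ s ∧ volume {x | x ∈ Ioi (0:ℝ) ∧ s < |f x|} ≤ ENNReal.ofReal t}

/-- Hardy–Littlewood–Pólya submajorization `|f| ≺≺ g` on `(0,1)`. -/
def Submaj01 (f g : ℝ → ℝ) : Prop :=
  ∀ t ∈ Ioc (0:ℝ) 1,
    ∫⁻ s in Ioo (0:ℝ) t, ENNReal.ofReal (mu01 f s) ≤
      ∫⁻ s in Ioo (0:ℝ) t, ENNReal.ofReal (mu01 g s)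

/-- Hardy–Littlewood–Pólya submajorization `|f| ≺≺ g` on `(0,∞)`. -/
def SubmajInf (f g : ℝ → ℝ) : Prop :=
  ∀ t : ℝ, 0 < t →
    ∫⁻ s in Ioo (0:ℝ) t, ENNReal.ofReal (muInf f s) ≤
      ∫⁻ s in Ioo (0:ℝ) t, ENNReal.ofReal (muInf g s)


lemma muInf_nonneg (f : ℝ → ℝ) (t : ℝ) : 0 ≤ muInf f t :=
  Real.sInf_nonneg (fun _ hy => hy.1)

lemma muInf_bddBelow (f : ℝ → ℝ) (t : ℝ) :
    BddBelow {s : ℝ | 0 ≤ s ∧ volume {x | x ∈ Ioi (0:ℝ) ∧ s < |f x|} ≤ ENNReal.ofReal t} :=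
  ⟨0, fun _ hy => hy.1⟩

lemma muInf_le {f : ℝ → ℝ} {t lam : ℝ} (hl : 0 ≤ lam)
    (h : volume {x | x ∈ Ioi (0:ℝ) ∧ lam < |f x|} ≤ ENNReal.ofReal t) : muInf f t ≤ lam :=
  csInf_le (muInf_bddBelow f t) ⟨hl, h⟩

lemma muInf_set_nonempty {f : ℝ → ℝ} (hf : IntegrableOn f (Ioi 0) volume) {s : ℝ} (hs : 0 < s) :
    {lam : ℝ | 0 ≤ lam ∧ volume {x | x ∈ Ioi (0:ℝ) ∧ lam < |f x|} ≤ ENNReal.ofReal s}.Nonempty := by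
  set I : ℝ≥0∞ := ∫⁻ x in Ioi (0:ℝ), ENNReal.ofReal (|f x|) with hI
  have hIfin : I ≠ ⊤ := by
    have := hf.2
    rw [hasFiniteIntegral_iff_norm] at this
    simpa [hI, Real.norm_eq_abs] using this.ne
  set lam : ℝ := (I.toReal + 1) / s with hlam
  have hlampos : 0 < lam := div_pos (by positivity) hs
  refine ⟨lam, le_of_lt hlampos, ?_⟩
  have hmeas : AEMeasurable (fun x => ENNReal.ofReal (|f x|)) (volume.restrict (Ioi 0)) :=
    (hf.aemeasurable.norm.congr (by simp [Real.norm_eq_abs])).ennreal_ofReal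
  have hset : {x | x ∈ Ioi (0:ℝ) ∧ lam < |f x|}
      ⊆ {x | ENNReal.ofReal lam ≤ ENNReal.ofReal (|f x|)} ∩ Ioi 0 := by
    rintro x ⟨hx1, hx2⟩
    exact ⟨ENNReal.ofReal_le_ofReal hx2.le, hx1⟩
  refine le_trans (measure_mono hset) ?_
  rw [← Measure.restrict_apply' measurableSet_Ioi]
  refine le_trans (meas_ge_le_lintegral_div hmeas (by simp [hlampos]) (by simp)) ?_
  rw [ENNReal.div_le_iff_le_mul (Or.inl (by simp [hlampos])) (Or.inl (by simp))]
  calc I ≤ ENNReal.ofReal (I.toReal + 1) := by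
        rw [← ENNReal.ofReal_toReal hIfin]
        exact ENNReal.ofReal_le_ofReal (by simp [ENNReal.toReal_nonneg])
    _ ≤ ENNReal.ofReal s * ENNReal.ofReal lam := by
        rw [← ENNReal.ofReal_mul hs.le, hlam, mul_div_cancel₀ _ hs.ne']

lemma muInf_antitoneOn {f : ℝ → ℝ} (hf : IntegrableOn f (Ioi 0) volume) :
    AntitoneOn (muInf f) (Ioi 0) := by
  intro s1 hs1 s2 _ h12
  refine csInf_le_csInf (muInf_bddBelow f s2) (muInf_set_nonempty hf hs1) ?_
  rintro lam ⟨h1, h2⟩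
  exact ⟨h1, h2.trans (ENNReal.ofReal_le_ofReal h12)⟩

lemma muInf_aemeasurable {f : ℝ → ℝ} (hf : IntegrableOn f (Ioi 0) volume) :
    AEMeasurable (muInf f) (volume.restrict (Ioi 0)) :=
  aemeasurable_restrict_of_antitoneOn measurableSet_Ioi (muInf_antitoneOn hf)

lemma key_distribution (f : ℝ → ℝ) {lam : ℝ} (hl : 0 ≤ lam) :
    volume ({s | lam < muInf f s} ∩ Ioi 0) ≤ volume {x | x ∈ Ioi (0:ℝ) ∧ lam < |f x|} := by
  set D := volume {x | x ∈ Ioi (0:ℝ) ∧ lam < |f x|} with hD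
  by_cases hDt : D = ⊤
  · simp [hDt]
  have hsub : {s | lam < muInf f s} ∩ Ioi 0 ⊆ Ioo 0 D.toReal := by
    rintro s ⟨hs1, hs2⟩
    have h1 : ENNReal.ofReal s < D := by
      by_contra hcon
      push_neg at hcon
      exact absurd (muInf_le hl hcon) (not_le.mpr hs1)
    exact ⟨hs2, (ENNReal.ofReal_lt_iff_lt_toReal (le_of_lt hs2) hDt).mp h1⟩
  refine le_trans (measure_mono hsub) ?_
  rw [Real.volume_Ioo]
  simpa using ENNReal.ofReal_toReal_le

lemma orlicz_pointwise {G : ℝ → ℝ} (hG : ConvexOn ℝ (Ici 0) G) (hG0 : G 0 = 0)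
    (hGnn : ∀ t, 0 ≤ t → 0 ≤ G t) {M u : ℝ} (hM : 0 ≤ M) (hGM : 0 < G M) (hu : 0 ≤ u) :
    max (u - M) 0 ≤ M / G M * G u := by
  rcases le_or_gt u M with h | h
  · have : max (u - M) 0 = 0 := max_eq_right (by linarith)
    rw [this]
    exact mul_nonneg (div_nonneg hM hGM.le) (hGnn u hu)
  · have hupos : 0 < u := lt_of_le_of_lt hM h
    have ha : (0:ℝ) ≤ M / u := div_nonneg hM hupos.le
    have hb : (0:ℝ) ≤ 1 - M / u := by
      rw [sub_nonneg]; exact div_le_one_of_le₀ h.le hupos.le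
    have hab : M / u + (1 - M / u) = 1 := by ring
    have hcvx := hG.2 (mem_Ici.mpr hu) (mem_Ici.mpr (le_refl (0:ℝ))) ha hb hab
    rw [smul_eq_mul, smul_eq_mul, smul_eq_mul, smul_eq_mul, mul_zero, add_zero,
      div_mul_cancel₀ _ hupos.ne', hG0, mul_zero, add_zero] at hcvx
    -- hcvx : G M ≤ M / u * G u
    have h1 : u * G M ≤ M * G u := by
      have := mul_le_mul_of_nonneg_left hcvx hupos.le
      calc u * G M ≤ u * (M / u * G u) := this
        _ = M * G u := by field_simp
    have h2 : u ≤ M / G M * G u := by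
      rw [div_mul_eq_mul_div, le_div_iff₀ hGM]
      linarith [h1]
    exact max_le (by linarith) (by linarith)

lemma main_bound {G f : ℝ → ℝ} (hGc : ConvexOn ℝ (Ici 0) G) (hG0 : G 0 = 0)
    (hGnn : ∀ t, 0 ≤ t → 0 ≤ G t) {M C : ℝ} (hM : 0 ≤ M) (hGM : 0 < G M)
    (hf : IntegrableOn f (Ioi 0) volume)
    (hfG : ∫⁻ x in Ioi (0:ℝ), ENNReal.ofReal (G |f x|) ≤ ENNReal.ofReal C) (t : ℝ) :
    ∫⁻ s in Ioo (0:ℝ) t, ENNReal.ofReal (muInf f s) ≤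
      ENNReal.ofReal (t * M) + ENNReal.ofReal (M / G M) * ENNReal.ofReal C := by
  have habs : AEMeasurable (fun x => |f x|) (volume.restrict (Ioi 0)) :=
    hf.aemeasurable.norm.congr (by simp [Real.norm_eq_abs])
  have step1 : ∀ s, ENNReal.ofReal (muInf f s) ≤
      ENNReal.ofReal M + ENNReal.ofReal (max (muInf f s - M) 0) := by
    intro s
    rw [← ENNReal.ofReal_add hM (le_max_right _ _)]
    refine ENNReal.ofReal_le_ofReal ?_
    have := le_max_left (muInf f s - M) 0
    linarith
  have hmble : AEMeasurable (fun s => max (muInf f s - M) 0) (volume.restrict (Ioi 0)) :=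
    ((muInf_aemeasurable hf).sub aemeasurable_const).max aemeasurable_const
  have hmble2 : AEMeasurable (fun x => max (|f x| - M) 0) (volume.restrict (Ioi 0)) :=
    (habs.sub aemeasurable_const).max aemeasurable_const
  have hanti : Antitone (fun lam =>
      (volume.restrict (Ioi 0)) {x | lam < max (|f x| - M) 0}) := by
    intro l1 l2 h12
    exact measure_mono (fun x hx => lt_of_le_of_lt h12 hx)
  calc ∫⁻ s in Ioo (0:ℝ) t, ENNReal.ofReal (muInf f s)
      ≤ ∫⁻ s in Ioo (0:ℝ) t,
          (ENNReal.ofReal M + ENNReal.ofReal (max (muInf f s - M) 0)) :=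
        lintegral_mono step1
    _ = ENNReal.ofReal M * volume (Ioo (0:ℝ) t)
        + ∫⁻ s in Ioo (0:ℝ) t, ENNReal.ofReal (max (muInf f s - M) 0) := by
        rw [lintegral_add_left measurable_const, setLIntegral_const]
    _ ≤ ENNReal.ofReal (t * M)
        + ∫⁻ s in Ioi (0:ℝ), ENNReal.ofReal (max (muInf f s - M) 0) := by
        refine add_le_add ?_ (lintegral_mono' (Measure.restrict_mono Ioo_subset_Ioi_self le_rfl) le_rfl)
        rw [Real.volume_Ioo, ← ENNReal.ofReal_mul hM, sub_zero, mul_comm]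
    _ = ENNReal.ofReal (t * M) + ∫⁻ lam in Ioi (0:ℝ),
          (volume.restrict (Ioi 0)) {s | lam < max (muInf f s - M) 0} := by
        congr 1
        exact lintegral_eq_lintegral_meas_lt (volume.restrict (Ioi 0))
          (f := fun s => max (muInf f s - M) 0) (ae_of_all _ fun s => le_max_right _ _) hmble
    _ ≤ ENNReal.ofReal (t * M) + ∫⁻ lam in Ioi (0:ℝ),
          (volume.restrict (Ioi 0)) {x | lam < max (|f x| - M) 0} := by
        refine add_le_add_right ?_ _
        refine setLIntegral_mono hanti.measurable ?_
        intro lam hlam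
        have hset1 : {s | lam < max (muInf f s - M) 0} = {s | M + lam < muInf f s} := by
          ext s
          simp only [mem_setOf_eq, lt_max_iff]
          constructor
          · rintro (h | h)
            · linarith
            · exact absurd h (not_lt.mpr (le_of_lt hlam))
          · intro h; left; linarith
        have hset2 : {x | lam < max (|f x| - M) 0} ∩ Ioi 0
            = {x | x ∈ Ioi (0:ℝ) ∧ M + lam < |f x|} := by
          ext x
          simp only [mem_inter_iff, mem_setOf_eq, lt_max_iff, mem_Ioi]
          constructor
          · rintro ⟨(h | h), hx⟩
            · exact ⟨hx, by linarith⟩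
            · exact absurd h (not_lt.mpr (le_of_lt hlam))
          · rintro ⟨hx, h⟩; exact ⟨Or.inl (by linarith), hx⟩
        rw [Measure.restrict_apply' measurableSet_Ioi,
          Measure.restrict_apply' measurableSet_Ioi, hset1, hset2]
        exact key_distribution f (by linarith [(le_of_lt hlam : (0:ℝ) ≤ lam)] : (0:ℝ) ≤ M + lam)
    _ = ENNReal.ofReal (t * M) + ∫⁻ x in Ioi (0:ℝ), ENNReal.ofReal (max (|f x| - M) 0) := by
        congr 1
        exact (lintegral_eq_lintegral_meas_lt (volume.restrict (Ioi 0))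
          (f := fun x => max (|f x| - M) 0) (ae_of_all _ fun x => le_max_right _ _) hmble2).symm
    _ ≤ ENNReal.ofReal (t * M) + ENNReal.ofReal (M / G M) * ENNReal.ofReal C := by
        refine add_le_add_right ?_ _
        have hpt : ∀ x, ENNReal.ofReal (max (|f x| - M) 0)
            ≤ ENNReal.ofReal (M / G M) * ENNReal.ofReal (G |f x|) := by
          intro x
          rw [← ENNReal.ofReal_mul (div_nonneg hM hGM.le)]
          exact ENNReal.ofReal_le_ofReal
            (orlicz_pointwise hGc hG0 hGnn hM hGM (abs_nonneg (f x)))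
        refine le_trans (lintegral_mono hpt) ?_
        rw [lintegral_const_mul' _ _ ENNReal.ofReal_ne_top]
        exact mul_le_mul_right hfG _

lemma ge_muInf {g : ℝ → ℝ} (hg : IntegrableOn g (Ioi 0) volume)
    (hmono : AntitoneOn g (Ioi 0)) (hpos : ∀ x ∈ Ioi (0:ℝ), 0 < g x)
    {s y : ℝ} (hs : 0 < s) (hy : s < y) : g y ≤ muInf g s := by
  refine le_csInf (muInf_set_nonempty hg hs) ?_
  rintro lam ⟨hl0, hl⟩
  by_contra hcon
  push_neg at hcon
  have hy0 : (0:ℝ) < y := lt_trans hs hy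
  have hsub : Ioc 0 y ⊆ {x | x ∈ Ioi (0:ℝ) ∧ lam < |g x|} := by
    rintro x ⟨hx1, hx2⟩
    have hgx : g y ≤ g x := hmono hx1 hy0 hx2
    refine ⟨hx1, ?_⟩
    rw [abs_of_pos (hpos x hx1)]
    linarith
  have h1 : volume (Ioc (0:ℝ) y) ≤ ENNReal.ofReal s := le_trans (measure_mono hsub) hl
  rw [Real.volume_Ioc, sub_zero] at h1
  have := (ENNReal.ofReal_le_ofReal_iff hs.le).mp h1
  linarith

theorem stmt8 (K : Set (ℝ → ℝ))
    (hK : ∀ f ∈ K, IntegrableOn f (Ioi 0) volume)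
    (hKb : ∃ C : ℝ, ∀ f ∈ K, ∫ x in Ioi (0:ℝ), |f x| ≤ C)
    (htail : ∀ ε : ℝ, 0 < ε → ∃ N : ℝ, ∀ f ∈ K,
      ∫⁻ s in Ioi N, ENNReal.ofReal (muInf f s) < ENNReal.ofReal ε)
    (G : ℝ → ℝ) (hG : IsOrliczFunction G)
    (hGt : Tendsto (fun t => G t / t) atTop atTop)
    (hsup : ∃ C : ℝ, ∀ f ∈ K,
      ∫⁻ s in Ioi (0:ℝ), ENNReal.ofReal (G |f s|) ≤ ENNReal.ofReal C) :
    ∃ g : ℝ → ℝ, (∀ x ∈ Ioi (0:ℝ), 0 < g x) ∧ IntegrableOn g (Ioi 0) volume ∧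
      ∀ f ∈ K, SubmajInf f g := by
  obtain ⟨hGc, hGnn, hG0, -, -⟩ := hG
  obtain ⟨C0, hsupC0⟩ := hsup
  set C : ℝ := max C0 0 with hCdef
  have hC : 0 ≤ C := le_max_right _ _
  have hsupC : ∀ f ∈ K, ∫⁻ s in Ioi (0:ℝ), ENNReal.ofReal (G |f s|) ≤ ENNReal.ofReal C :=
    fun f hf => (hsupC0 f hf).trans (ENNReal.ofReal_le_ofReal (le_max_left _ _))
  -- a helper producing good Ms
  have hMex : ∀ k : ℝ, ∃ M : ℝ, 1 ≤ M ∧ 0 < G M ∧ M / G M ≤ 1 / max k 1 := by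
    intro k
    set k' := max k 1 with hk'def
    have hk' : (0:ℝ) < k' := lt_of_lt_of_le one_pos (le_max_right _ _)
    obtain ⟨M, hM1, hM2⟩ := ((hGt.eventually_ge_atTop k').and (eventually_ge_atTop 1)).exists
    have hMpos : (0:ℝ) < M := lt_of_lt_of_le one_pos hM2
    have hGMk : k' * M ≤ G M := by
      rw [← le_div_iff₀ hMpos] at *
      exact hM1
    have hGM : 0 < G M := lt_of_lt_of_le (by positivity) hGMk
    refine ⟨M, hM2, hGM, ?_⟩
    rw [div_le_div_iff₀ hGM hk']
    nlinarith
  -- uniform smallness near zero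
  have hsmall : ∀ ε : ℝ, 0 < ε → ∃ δ : ℝ, 0 < δ ∧ ∀ t : ℝ, 0 < t → t ≤ δ → ∀ f ∈ K,
      ∫⁻ s in Ioo (0:ℝ) t, ENNReal.ofReal (muInf f s) ≤ ENNReal.ofReal ε := by
    intro ε hε
    obtain ⟨M, hM1, hGM, hMG⟩ := hMex (2 * (C + 1) / ε)
    have hMpos : (0:ℝ) < M := lt_of_lt_of_le one_pos hM1
    set k' := max (2 * (C + 1) / ε) 1 with hk'def
    have hk1 : 2 * (C + 1) / ε ≤ k' := le_max_left _ _
    have hk' : (0:ℝ) < k' := lt_of_lt_of_le one_pos (le_max_right _ _)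
    have hterm : M / G M * C ≤ ε / 2 := by
      have h1 : M / G M * C ≤ 1 / k' * C :=
        mul_le_mul_of_nonneg_right hMG hC
      have h2 : 1 / k' * C ≤ ε / 2 := by
        rw [div_mul_eq_mul_div, one_mul, div_le_iff₀ hk']
        have h3 : C ≤ ε / 2 * (2 * (C + 1) / ε) := by
          have : ε / 2 * (2 * (C + 1) / ε) = C + 1 := by field_simp
          rw [this]; linarith
        calc C ≤ ε / 2 * (2 * (C + 1) / ε) := h3
          _ ≤ ε / 2 * k' := by
            exact mul_le_mul_of_nonneg_left hk1 (by positivity)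
      linarith
    refine ⟨ε / (2 * M), by positivity, ?_⟩
    intro t ht htδ f hf
    refine (main_bound hGc hG0 hGnn (by linarith) hGM (hK f hf) (hsupC f hf) t).trans ?_
    have h1 : t * M ≤ ε / 2 := by
      have h2 : t * M ≤ ε / (2 * M) * M := mul_le_mul_of_nonneg_right htδ hMpos.le
      have h3 : ε / (2 * M) * M = ε / 2 := by field_simp
      linarith
    calc ENNReal.ofReal (t * M) + ENNReal.ofReal (M / G M) * ENNReal.ofReal C
        = ENNReal.ofReal (t * M) + ENNReal.ofReal (M / G M * C) := by
          rw [ENNReal.ofReal_mul (div_nonneg (by linarith) hGM.le)]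
      _ ≤ ENNReal.ofReal (ε / 2) + ENNReal.ofReal (ε / 2) :=
          add_le_add (ENNReal.ofReal_le_ofReal h1) (ENNReal.ofReal_le_ofReal hterm)
      _ = ENNReal.ofReal ε := by
          rw [← ENNReal.ofReal_add (by positivity) (by positivity)]
          norm_num
  -- global bound B
  obtain ⟨N, hN⟩ := htail 1 one_pos
  obtain ⟨M₀, hM₀1, hGM₀, -⟩ := hMex 1
  have hM₀pos : (0:ℝ) < M₀ := lt_of_lt_of_le one_pos hM₀1
  set N' : ℝ := max N 1 with hN'def
  have hN'pos : (0:ℝ) < N' := lt_of_lt_of_le one_pos (le_max_right _ _)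
  set B : ℝ := N' * M₀ + M₀ / G M₀ * C + 1 with hBdef
  have hB : 0 ≤ B := by
    have h1 := mul_nonneg (div_nonneg hM₀pos.le hGM₀.le) hC
    have h2 := mul_nonneg hN'pos.le hM₀pos.le
    rw [hBdef]; linarith
  have hbase : ∀ t : ℝ, t ≤ N' → ∀ f ∈ K,
      ∫⁻ s in Ioo (0:ℝ) t, ENNReal.ofReal (muInf f s) ≤
        ENNReal.ofReal (N' * M₀ + M₀ / G M₀ * C) := by
    intro t htN f hf
    refine (main_bound hGc hG0 hGnn hM₀pos.le hGM₀ (hK f hf) (hsupC f hf) t).trans ?_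
    calc ENNReal.ofReal (t * M₀) + ENNReal.ofReal (M₀ / G M₀) * ENNReal.ofReal C
        = ENNReal.ofReal (t * M₀) + ENNReal.ofReal (M₀ / G M₀ * C) := by
          rw [ENNReal.ofReal_mul (div_nonneg hM₀pos.le hGM₀.le)]
      _ ≤ ENNReal.ofReal (N' * M₀) + ENNReal.ofReal (M₀ / G M₀ * C) :=
          add_le_add_left (ENNReal.ofReal_le_ofReal
            (mul_le_mul_of_nonneg_right htN hM₀pos.le)) _
      _ = ENNReal.ofReal (N' * M₀ + M₀ / G M₀ * C) :=
          (ENNReal.ofReal_add (mul_nonneg hN'pos.le hM₀pos.le)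
            (mul_nonneg (div_nonneg hM₀pos.le hGM₀.le) hC)).symm
  have hglobal : ∀ t : ℝ, ∀ f ∈ K,
      ∫⁻ s in Ioo (0:ℝ) t, ENNReal.ofReal (muInf f s) ≤ ENNReal.ofReal B := by
    intro t f hf
    rcases le_or_gt t N' with h | h
    · refine (hbase t h f hf).trans (ENNReal.ofReal_le_ofReal ?_)
      rw [hBdef]; linarith
    · have hsub : Ioo (0:ℝ) t ⊆ Ioo 0 N' ∪ Ici N' := by
        rintro s ⟨hs1, _⟩
        rcases lt_or_ge s N' with hs | hs
        · exact Or.inl ⟨hs1, hs⟩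
        · exact Or.inr hs
      calc ∫⁻ s in Ioo (0:ℝ) t, ENNReal.ofReal (muInf f s)
          ≤ ∫⁻ s in Ioo (0:ℝ) N' ∪ Ici N', ENNReal.ofReal (muInf f s) :=
            lintegral_mono' (Measure.restrict_mono hsub le_rfl) le_rfl
        _ ≤ (∫⁻ s in Ioo (0:ℝ) N', ENNReal.ofReal (muInf f s))
            + ∫⁻ s in Ici N', ENNReal.ofReal (muInf f s) :=
            lintegral_union_le _ _ _
        _ = (∫⁻ s in Ioo (0:ℝ) N', ENNReal.ofReal (muInf f s))
            + ∫⁻ s in Ioi N', ENNReal.ofReal (muInf f s) := by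
            rw [setLIntegral_congr (Ioi_ae_eq_Ici (a := N')).symm]
        _ ≤ ENNReal.ofReal (N' * M₀ + M₀ / G M₀ * C) + ENNReal.ofReal 1 := by
            refine add_le_add (hbase N' le_rfl f hf) ?_
            refine le_trans (lintegral_mono'
              (Measure.restrict_mono (Ioi_subset_Ioi (le_max_left N 1)) le_rfl) le_rfl) ?_
            exact (hN f hf).le
        _ = ENNReal.ofReal B := by
            have h1 := mul_nonneg hN'pos.le hM₀pos.le
            have h2 := mul_nonneg (div_nonneg hM₀pos.le hGM₀.le) hC
            rw [← ENNReal.ofReal_add (by linarith) (by norm_num), hBdef]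
  -- choose the sequence δ, tseq
  have hsmall' : ∀ n : ℕ, ∃ δ : ℝ, 0 < δ ∧ ∀ t : ℝ, 0 < t → t ≤ δ → ∀ f ∈ K,
      ∫⁻ s in Ioo (0:ℝ) t, ENNReal.ofReal (muInf f s) ≤ ENNReal.ofReal ((1/2)^n) :=
    fun n => hsmall ((1/2)^n) (by positivity)
  choose δ hδpos hδ using hsmall'
  let tseq : ℕ → ℝ := fun n => Nat.recAux 1 (fun n tn => min (δ (n+1)) (tn / 2)) n
  have htseq_succ : ∀ n, tseq (n+1) = min (δ (n+1)) (tseq n / 2) := fun n => rfl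
  have htpos : ∀ n, 0 < tseq n := by
    intro n
    induction n with
    | zero => norm_num [tseq]
    | succ n ih => rw [htseq_succ]; exact lt_min (hδpos _) (by positivity)
  have htδ : ∀ n, tseq (n+1) ≤ δ (n+1) := fun n => min_le_left _ _
  have htle : ∀ n, tseq n ≤ (1/2)^n := by
    intro n
    induction n with
    | zero => norm_num [tseq]
    | succ n ih =>
      rw [htseq_succ]
      refine le_trans (min_le_right _ _) ?_
      rw [pow_succ]
      linarith
  have hP : ∀ n : ℕ, n ≠ 0 → ∀ t : ℝ, 0 < t → t ≤ tseq n → ∀ f ∈ K,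
      ∫⁻ s in Ioo (0:ℝ) t, ENNReal.ofReal (muInf f s) ≤ ENNReal.ofReal ((1/2)^n) := by
    intro n hn t ht htn f hf
    obtain ⟨m, rfl⟩ := Nat.exists_eq_succ_of_ne_zero hn
    exact hδ (m+1) t ht (htn.trans (htδ m)) f hf
  -- the dominating function
  set b : ℕ → ℝ := fun n => if n = 0 then B else (1/2)^n with hbdef
  have hbnn : ∀ n, 0 ≤ b n := by
    intro n; rw [hbdef]; dsimp only; split
    · exact hB
    · positivity
  set c : ℕ → ℝ := fun n => 2 * b n / tseq (n+1) with hcdef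
  have hcnn : ∀ n, 0 ≤ c n := fun n => div_nonneg (by linarith [hbnn n]) (htpos (n+1)).le
  set T : ℝ → ℝ≥0∞ := fun x =>
    ∑' n, (Ioo (0:ℝ) (tseq (n+1))).indicator (fun _ => ENNReal.ofReal (c n)) x with hTdef
  have hTzero : ∀ x : ℝ, x ≤ 0 → T x = 0 := by
    intro x hx
    rw [hTdef]
    dsimp only
    convert tsum_zero with n
    exact indicator_of_notMem (fun h => absurd h.1 (not_lt.mpr hx)) _
  have hTfin : ∀ x, T x ≠ ⊤ := by
    intro x
    rcases le_or_gt x 0 with hx | hx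
    · simp [hTzero x hx]
    · obtain ⟨m, hm⟩ := exists_pow_lt_of_lt_one hx (by norm_num : (1:ℝ)/2 < 1)
      have hsupp : ∀ n ∉ Finset.range m,
          (Ioo (0:ℝ) (tseq (n+1))).indicator (fun _ => ENNReal.ofReal (c n)) x = 0 := by
        intro n hn
        rw [Finset.mem_range, not_lt] at hn
        refine indicator_of_notMem (fun hmem => ?_) _
        have h1 : tseq (n+1) ≤ (1/2)^m := by
          refine le_trans (htle (n+1)) ?_
          exact pow_le_pow_of_le_one (by norm_num) (by norm_num) (by omega)
        exact absurd hmem.2 (not_lt.mpr (h1.trans hm.le))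
      rw [hTdef]
      dsimp only
      rw [tsum_eq_sum hsupp]
      refine (ENNReal.sum_lt_top.mpr (fun a _ => ?_)).ne
      exact lt_of_le_of_lt (Set.indicator_le_self _ _ x) ENNReal.ofReal_lt_top
  have hTmeas : Measurable T := by
    rw [hTdef]
    exact Measurable.ennreal_tsum (fun n => measurable_const.indicator measurableSet_Ioo)
  have hTeach : ∀ n : ℕ, ∫⁻ x in Ioi (0:ℝ),
      (Ioo (0:ℝ) (tseq (n+1))).indicator (fun _ => ENNReal.ofReal (c n)) x
      = ENNReal.ofReal (2 * b n) := by
    intro n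
    rw [lintegral_indicator measurableSet_Ioo, setLIntegral_const,
      Measure.restrict_apply measurableSet_Ioo,
      inter_eq_left.mpr Ioo_subset_Ioi_self, Real.volume_Ioo, sub_zero,
      ← ENNReal.ofReal_mul (hcnn n), hcdef]
    congr 1
    dsimp only
    rw [div_mul_cancel₀]
    exact (htpos (n+1)).ne'
  have hTint : ∫⁻ x in Ioi (0:ℝ), T x ≠ ⊤ := by
    have h1 : ∫⁻ x in Ioi (0:ℝ), T x = ∑' n, ENNReal.ofReal (2 * b n) := by
      rw [hTdef]
      dsimp only
      rw [lintegral_tsum (fun n => (measurable_const.indicator measurableSet_Ioo).aemeasurable)]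
      exact tsum_congr hTeach
    rw [h1]
    have h2 : ∑' n, ENNReal.ofReal (2 * b n)
        ≤ ENNReal.ofReal (2 * (B + 1)) * ∑' n : ℕ, (ENNReal.ofReal ((1/2):ℝ))^n := by
      rw [← ENNReal.tsum_mul_left]
      refine ENNReal.tsum_le_tsum (fun n => ?_)
      rw [← ENNReal.ofReal_pow (by norm_num), ← ENNReal.ofReal_mul (by linarith)]
      refine ENNReal.ofReal_le_ofReal ?_
      rw [hbdef]
      dsimp only
      rcases eq_or_ne n 0 with rfl | hn
      · norm_num
      · rw [if_neg hn]
        have hp : (0:ℝ) < (1/2)^n := by positivity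
        nlinarith [mul_nonneg hB hp.le]
    refine ne_top_of_le_ne_top ?_ h2
    rw [ENNReal.tsum_geometric]
    refine ENNReal.mul_ne_top ENNReal.ofReal_ne_top ?_
    refine ENNReal.inv_ne_top.mpr ?_
    have : ENNReal.ofReal ((1:ℝ)/2) < 1 := ENNReal.ofReal_lt_one.mpr (by norm_num)
    exact (tsub_pos_iff_lt.mpr this).ne'
  set g : ℝ → ℝ := fun x => Real.exp (-x) + (T x).toReal with hgdef
  have hgpos : ∀ x ∈ Ioi (0:ℝ), 0 < g x := by
    intro x _
    have h1 := Real.exp_pos (-x)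
    have h2 := ENNReal.toReal_nonneg (a := T x)
    rw [hgdef]; dsimp only; linarith
  have hgint : IntegrableOn g (Ioi 0) volume := by
    have h1 : IntegrableOn (fun x => Real.exp (-x)) (Ioi 0) volume := by
      have := exp_neg_integrableOn_Ioi 0 (b := 1) one_pos
      simpa using this
    have h2 : IntegrableOn (fun x => (T x).toReal) (Ioi 0) volume :=
      integrable_toReal_of_lintegral_ne_top hTmeas.aemeasurable hTint
    exact h1.add h2
  have hganti : AntitoneOn g (Ioi 0) := by
    intro x hx y _ hxy
    have hT : T y ≤ T x := by
      rw [hTdef]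
      refine ENNReal.tsum_le_tsum (fun n => ?_)
      by_cases hmem : y ∈ Ioo (0:ℝ) (tseq (n+1))
      · rw [indicator_of_mem hmem, indicator_of_mem (mem_Ioo.mpr
          ⟨mem_Ioi.mp hx, lt_of_le_of_lt hxy (mem_Ioo.mp hmem).2⟩)]
      · rw [indicator_of_notMem hmem]; exact zero_le
    rw [hgdef]; dsimp only
    exact add_le_add (Real.exp_le_exp.mpr (by linarith)) (ENNReal.toReal_mono (hTfin x) hT)
  have hRHS : ∀ t' : ℝ, 0 < t' → ∀ n : ℕ, tseq (n+1) / 2 ≤ t' →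
      ENNReal.ofReal (b n) ≤ ∫⁻ s in Ioo (0:ℝ) t', ENNReal.ofReal (muInf g s) := by
    intro t' ht' n hn
    have hu : 0 < tseq (n+1) := htpos (n+1)
    calc ENNReal.ofReal (b n)
        = ENNReal.ofReal (c n) * ENNReal.ofReal (tseq (n+1) / 2) := by
          rw [← ENNReal.ofReal_mul (hcnn n), hcdef]
          congr 1
          dsimp only
          field_simp
      _ = ∫⁻ s in Ioo (0:ℝ) t',
            (Ioo (0:ℝ) (tseq (n+1) / 2)).indicator (fun _ => ENNReal.ofReal (c n)) s := by
          rw [lintegral_indicator measurableSet_Ioo, setLIntegral_const,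
            Measure.restrict_apply measurableSet_Ioo,
            inter_eq_left.mpr (Ioo_subset_Ioo_right hn), Real.volume_Ioo, sub_zero]
      _ ≤ ∫⁻ s in Ioo (0:ℝ) t', T (2 * s) := by
          refine lintegral_mono (fun s => ?_)
          by_cases hmem : s ∈ Ioo (0:ℝ) (tseq (n+1) / 2)
          · rw [indicator_of_mem hmem, hTdef]
            refine le_trans (le_of_eq ?_) (ENNReal.le_tsum n)
            rw [mem_Ioo] at hmem
            rw [indicator_of_mem (mem_Ioo.mpr ⟨by linarith [hmem.1], by linarith [hmem.2]⟩)]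
          · rw [indicator_of_notMem hmem]; exact zero_le
      _ ≤ ∫⁻ s in Ioo (0:ℝ) t', ENNReal.ofReal (g (2 * s)) := by
          refine lintegral_mono (fun s => ?_)
          rw [hgdef]
          dsimp only
          calc T (2 * s) = ENNReal.ofReal ((T (2*s)).toReal) :=
                (ENNReal.ofReal_toReal (hTfin _)).symm
            _ ≤ ENNReal.ofReal (Real.exp (-(2*s)) + (T (2*s)).toReal) :=
                ENNReal.ofReal_le_ofReal (by linarith [(Real.exp_pos (-(2*s))).le])
      _ ≤ ∫⁻ s in Ioo (0:ℝ) t', ENNReal.ofReal (muInf g s) := by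
          rw [← lintegral_indicator measurableSet_Ioo,
            ← lintegral_indicator measurableSet_Ioo]
          refine lintegral_mono (fun s => ?_)
          by_cases hmem : s ∈ Ioo (0:ℝ) t'
          · rw [indicator_of_mem hmem, indicator_of_mem hmem]
            refine ENNReal.ofReal_le_ofReal ?_
            have hs0 : 0 < s := hmem.1
            exact ge_muInf hgint hganti hgpos hs0 (by linarith)
          · rw [indicator_of_notMem hmem, indicator_of_notMem hmem]
  refine ⟨g, hgpos, hgint, ?_⟩
  intro f hf t ht
  rcases lt_or_ge (tseq 1) t with hcase | hcase
  · refine le_trans (hglobal t f hf) ?_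
    have h0 : tseq (0+1) / 2 ≤ t := by linarith [htpos 1]
    have := hRHS t ht 0 h0
    simpa [hbdef] using this
  · have hex : ∃ m : ℕ, tseq (m+1) < t := by
      obtain ⟨m, hm⟩ := exists_pow_lt_of_lt_one ht (by norm_num : (1:ℝ)/2 < 1)
      refine ⟨m, lt_of_le_of_lt (le_trans (htle (m+1)) ?_) hm⟩
      exact pow_le_pow_of_le_one (by norm_num) (by norm_num) (by omega)
    set n := Nat.find hex with hndef
    have hn1 : tseq (n+1) < t := Nat.find_spec hex
    have hn0 : n ≠ 0 := by
      intro h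
      rw [h] at hn1
      exact absurd hn1 (not_lt.mpr hcase)
    obtain ⟨m, hm⟩ := Nat.exists_eq_succ_of_ne_zero hn0
    have htn : t ≤ tseq n := by
      have h3 := Nat.find_min hex (show m < n by omega)
      have h4 : t ≤ tseq (m+1) := not_lt.mp h3
      have h5 : n = m + 1 := by omega
      rw [h5]
      exact h4
    refine le_trans (hP n hn0 t ht htn f hf) ?_
    have h2 : tseq (n+1) / 2 ≤ t := by linarith
    refine le_trans (le_of_eq ?_) (hRHS t ht n h2)
    rw [hbdef]
    simp [hn0]
end

section
/- Let K be a bounded subset of L¹(0,∞) and suppose there exists a positive g ∈ L¹(0,∞) with |f| ≺≺ g for all f ∈ K. Then there exists an N-function G (so in particular G(t)/t → ∞ as t → ∞) such that sup{∫_0^∞ G(|f(s)|) ds : f ∈ K} < ∞. -/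
open MeasureTheory Set Filter Topology
open ENNReal

namespace Stmt9

noncomputable def dd (f : ℝ → ℝ) (t : ℝ) : ℝ≥0∞ :=
  volume {x | x ∈ Ioi (0:ℝ) ∧ t < |f x|}

lemma muInf_eq (f : ℝ → ℝ) (t : ℝ) :
    muInf f t = sInf {v : ℝ | 0 ≤ v ∧ dd f v ≤ ENNReal.ofReal t} := rfl

lemma dd_antitone (f : ℝ → ℝ) : Antitone (dd f) := fun s t h =>
  measure_mono (fun x hx => ⟨hx.1, lt_of_le_of_lt h hx.2⟩)

lemma dd_congr {f f' : ℝ → ℝ} (h : f =ᵐ[volume.restrict (Ioi 0)] f') (t : ℝ) :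
    dd f t = dd f' t := by
  have hnull : volume ({x | f x ≠ f' x} ∩ Ioi 0) = 0 := by
    rw [← Measure.restrict_apply' measurableSet_Ioi]
    exact h
  refine measure_congr ?_
  rw [MeasureTheory.ae_eq_set]
  constructor
  · refine measure_mono_null ?_ hnull
    rintro x ⟨⟨hx1, hx2⟩, hx3⟩
    simp only [mem_setOf_eq, mem_inter_iff] at *
    exact ⟨fun hc => hx3 ⟨hx1, hc ▸ hx2⟩, hx1⟩
  · refine measure_mono_null ?_ hnull
    rintro x ⟨⟨hx1, hx2⟩, hx3⟩
    simp only [mem_setOf_eq, mem_inter_iff] at *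
    exact ⟨fun hc => hx3 ⟨hx1, hc ▸ hx2⟩, hx1⟩

lemma muInf_congr {f f' : ℝ → ℝ} (h : f =ᵐ[volume.restrict (Ioi 0)] f') :
    muInf f = muInf f' := by
  funext t
  rw [muInf_eq, muInf_eq]
  congr 1
  ext v
  simp only [mem_setOf_eq, dd_congr h]

lemma dd_iSup (f : ℝ → ℝ) (t : ℝ) :
    dd f t = ⨆ n : ℕ, dd f (t + 1/(n+1)) := by
  have hmono : ∀ n m : ℕ, n ≤ m →
      {x | x ∈ Ioi (0:ℝ) ∧ t + 1/(n+1) < |f x|} ⊆ {x | x ∈ Ioi (0:ℝ) ∧ t + 1/(m+1) < |f x|} := by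
    intro n m hnm x hx
    refine ⟨hx.1, lt_of_le_of_lt ?_ hx.2⟩
    have hc : (n:ℝ) + 1 ≤ (m:ℝ) + 1 := by exact_mod_cast Nat.succ_le_succ hnm
    have : (1:ℝ)/(m+1) ≤ 1/(n+1) := by
      apply one_div_le_one_div_of_le (by positivity) hc
    linarith
  have hset : {x | x ∈ Ioi (0:ℝ) ∧ t < |f x|}
      = ⋃ n : ℕ, {x | x ∈ Ioi (0:ℝ) ∧ t + 1/(n+1) < |f x|} := by
    ext x
    simp only [mem_iUnion, mem_setOf_eq]
    constructor
    · rintro ⟨hx, hlt⟩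
      obtain ⟨n, hn⟩ := exists_nat_one_div_lt (sub_pos.2 hlt)
      exact ⟨n, hx, by linarith⟩
    · rintro ⟨n, hx, hlt⟩
      have : (0:ℝ) < 1/(n+1) := by positivity
      exact ⟨hx, by linarith⟩
  rw [dd, hset]
  exact Directed.measure_iUnion (fun n m => ⟨max n m,
    hmono n (max n m) (le_max_left _ _), hmono m (max n m) (le_max_right _ _)⟩)

lemma dd_markov {f : ℝ → ℝ} (hf : Measurable f) {t : ℝ} (ht : 0 < t) :
    ENNReal.ofReal t * dd f t ≤ ∫⁻ x in Ioi (0:ℝ), ENNReal.ofReal |f x| := by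
  have h1 : dd f t = volume.restrict (Ioi 0) {x | t < |f x|} := by
    rw [Measure.restrict_apply' measurableSet_Ioi, dd]
    congr 1
    ext x
    simp only [mem_setOf_eq, mem_inter_iff]
    tauto
  rw [h1]
  calc ENNReal.ofReal t * volume.restrict (Ioi 0) {x | t < |f x|}
      ≤ ENNReal.ofReal t *
        volume.restrict (Ioi 0) {x | ENNReal.ofReal t ≤ ENNReal.ofReal |f x|} := by
        gcongr
        intro hx
        exact ENNReal.ofReal_le_ofReal (le_of_lt hx)
    _ ≤ ∫⁻ x in Ioi (0:ℝ), ENNReal.ofReal |f x| :=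
        mul_meas_ge_le_lintegral₀ (hf.abs.ennreal_ofReal.aemeasurable) _

lemma exists_dle {f : ℝ → ℝ} (hf : Measurable f)
    (hIf : ∫⁻ x in Ioi (0:ℝ), ENNReal.ofReal |f x| ≠ ⊤) {s : ℝ} (hs : 0 < s) :
    ∃ v : ℝ, 0 ≤ v ∧ dd f v ≤ ENNReal.ofReal s := by
  set I := ∫⁻ x in Ioi (0:ℝ), ENNReal.ofReal |f x| with hI
  refine ⟨(I.toReal + 1)/s, by positivity, ?_⟩
  by_contra hc
  push_neg at hc
  have hv : (0:ℝ) < (I.toReal + 1)/s := by positivity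
  have h2 : ENNReal.ofReal ((I.toReal + 1)/s) * ENNReal.ofReal s ≤ I := by
    calc ENNReal.ofReal ((I.toReal + 1)/s) * ENNReal.ofReal s
        ≤ ENNReal.ofReal ((I.toReal + 1)/s) * dd f ((I.toReal + 1)/s) := mul_le_mul_right hc.le _
      _ ≤ I := dd_markov hf hv
  rw [← ENNReal.ofReal_mul (by positivity)] at h2
  have h3 : (I.toReal + 1)/s * s = I.toReal + 1 := by field_simp
  rw [h3] at h2
  have h4 : I < ENNReal.ofReal (I.toReal + 1) := by
    conv_lhs => rw [← ENNReal.ofReal_toReal hIf]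
    rw [ENNReal.ofReal_lt_ofReal_iff (by positivity)]
    linarith
  exact absurd (lt_of_le_of_lt h2 h4) (lt_irrefl _)

lemma muInf_nonneg (f : ℝ → ℝ) (t : ℝ) : 0 ≤ muInf f t := by
  rw [muInf_eq]
  exact Real.sInf_nonneg (fun v hv => hv.1)

lemma lt_muInf_iff {f : ℝ → ℝ} (hf : Measurable f)
    (hIf : ∫⁻ x in Ioi (0:ℝ), ENNReal.ofReal |f x| ≠ ⊤) {s t : ℝ} (hs : 0 < s) (ht : 0 ≤ t) :
    t < muInf f s ↔ ENNReal.ofReal s < dd f t := by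
  rw [muInf_eq]
  set S := {v : ℝ | 0 ≤ v ∧ dd f v ≤ ENNReal.ofReal s} with hS
  have hbdd : BddBelow S := ⟨0, fun v hv => hv.1⟩
  have hne : S.Nonempty := exists_dle hf hIf hs
  constructor
  · intro h
    by_contra hc
    push_neg at hc
    have : t ∈ S := ⟨ht, hc⟩
    exact absurd (csInf_le hbdd this) (by linarith)
  · intro h
    rw [dd_iSup] at h
    obtain ⟨n, hn⟩ := lt_iSup_iff.1 h
    have hsub : ∀ v ∈ S, t + 1/(n+1) ≤ v := by
      intro v hv
      by_contra hc
      push_neg at hc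
      exact absurd (le_trans (dd_antitone f hc.le) hv.2) (not_le.2 hn)
    have := le_csInf hne hsub
    have hpos : (0:ℝ) < 1/(n+1) := by positivity
    linarith

lemma muInf_antitoneOn {f : ℝ → ℝ} (hf : Measurable f)
    (hIf : ∫⁻ x in Ioi (0:ℝ), ENNReal.ofReal |f x| ≠ ⊤) :
    AntitoneOn (muInf f) (Ioi 0) := by
  intro a ha b hb hab
  rw [muInf_eq, muInf_eq]
  exact csInf_le_csInf ⟨0, fun v hv => hv.1⟩ (exists_dle hf hIf ha)
    (fun v hv => ⟨hv.1, le_trans hv.2 (ENNReal.ofReal_le_ofReal hab)⟩)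

lemma dist_muInf {f : ℝ → ℝ} (hf : Measurable f)
    (hIf : ∫⁻ x in Ioi (0:ℝ), ENNReal.ofReal |f x| ≠ ⊤) {t : ℝ} (ht : 0 ≤ t) :
    volume {s | s ∈ Ioi (0:ℝ) ∧ t < muInf f s} = dd f t := by
  have hset : {s | s ∈ Ioi (0:ℝ) ∧ t < muInf f s} = {s : ℝ | 0 < s ∧ ENNReal.ofReal s < dd f t} := by
    ext s
    simp only [mem_setOf_eq, mem_Ioi]
    constructor
    · rintro ⟨hs, hlt⟩
      exact ⟨hs, (lt_muInf_iff hf hIf hs ht).1 hlt⟩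
    · rintro ⟨hs, hlt⟩
      exact ⟨hs, (lt_muInf_iff hf hIf hs ht).2 hlt⟩
  rw [hset]
  rcases eq_or_ne (dd f t) ⊤ with h | h
  · have : {s : ℝ | 0 < s ∧ ENNReal.ofReal s < dd f t} = Ioi 0 := by
      ext s
      simp [h, mem_Ioi]
    rw [this, h]
    simp
  · have : {s : ℝ | 0 < s ∧ ENNReal.ofReal s < dd f t} = Ioo 0 ((dd f t).toReal) := by
      ext s
      simp only [mem_setOf_eq, mem_Ioo]
      constructor
      · rintro ⟨hs, hlt⟩
        exact ⟨hs, (ENNReal.ofReal_lt_iff_lt_toReal hs.le h).1 hlt⟩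
      · rintro ⟨hs, hlt⟩
        exact ⟨hs, (ENNReal.ofReal_lt_iff_lt_toReal hs.le h).2 hlt⟩
    rw [this, Real.volume_Ioo, sub_zero, ENNReal.ofReal_toReal h]

end Stmt9

namespace Stmt9

lemma layercake (φ : ℝ → ℝ) (hφm : AEMeasurable φ (volume.restrict (Ioi 0)))
    (hφ0 : ∀ x, 0 ≤ φ x) {l : ℝ} (hl : 0 ≤ l) :
    ∫⁻ x in Ioi (0:ℝ), ENNReal.ofReal (max (φ x - l) 0) =
      ∫⁻ t in Ioi (0:ℝ), volume {x | x ∈ Ioi (0:ℝ) ∧ l + t < φ x} := by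
  rw [lintegral_eq_lintegral_meas_lt (f := fun x => max (φ x - l) 0) (volume.restrict (Ioi 0))
    (ae_of_all _ (fun x => le_max_right _ _))
    (((hφm.sub aemeasurable_const).max aemeasurable_const))]
  refine setLIntegral_congr_fun measurableSet_Ioi (fun t ht => ?_)
  rw [Measure.restrict_apply' measurableSet_Ioi]
  congr 1
  ext x
  simp only [mem_setOf_eq, mem_inter_iff, mem_Ioi] at *
  constructor
  · rintro ⟨hx1, hx2⟩
    refine ⟨hx2, ?_⟩
    rcases le_or_gt (φ x - l) 0 with h | h
    · rw [max_eq_right h] at hx1; exact absurd hx1 (not_lt.2 ht.le)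
    · rw [max_eq_left h.le] at hx1; linarith
  · rintro ⟨hx1, hx2⟩
    refine ⟨?_, hx1⟩
    rw [max_eq_left (by linarith)]
    linarith

lemma eq_rearr {f : ℝ → ℝ} (hf : Measurable f)
    (hIf : ∫⁻ x in Ioi (0:ℝ), ENNReal.ofReal |f x| ≠ ⊤) {l : ℝ} (hl : 0 ≤ l) :
    ∫⁻ x in Ioi (0:ℝ), ENNReal.ofReal (max (|f x| - l) 0) =
      ∫⁻ s in Ioi (0:ℝ), ENNReal.ofReal (max (muInf f s - l) 0) := by
  rw [layercake (fun x => |f x|) hf.abs.aemeasurable (fun x => abs_nonneg _) hl,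
    layercake (muInf f) (aemeasurable_restrict_of_antitoneOn measurableSet_Ioi
      (muInf_antitoneOn hf hIf)) (muInf_nonneg f) hl]
  refine setLIntegral_congr_fun measurableSet_Ioi (fun t ht => ?_) |>.symm
  rw [dist_muInf hf hIf (by simp only [mem_Ioi] at ht; linarith)]
  rfl

lemma muInf_mul_le {g : ℝ → ℝ} {f : ℝ → ℝ} (hf : Measurable f)
    (hIf : ∫⁻ x in Ioi (0:ℝ), ENNReal.ofReal |f x| ≠ ⊤)
    (hmaj : SubmajInf f g) {s : ℝ} (hs : 0 < s) :
    ENNReal.ofReal (muInf f s) * ENNReal.ofReal s ≤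
      ∫⁻ u in Ioi (0:ℝ), ENNReal.ofReal (muInf g u) := by
  have h1 : ENNReal.ofReal (muInf f s) * ENNReal.ofReal s
      = ∫⁻ _ in Ioo (0:ℝ) s, ENNReal.ofReal (muInf f s) := by
    rw [setLIntegral_const, Real.volume_Ioo, sub_zero]
  rw [h1]
  calc ∫⁻ _ in Ioo (0:ℝ) s, ENNReal.ofReal (muInf f s)
      ≤ ∫⁻ u in Ioo (0:ℝ) s, ENNReal.ofReal (muInf f u) := by
        refine setLIntegral_mono_ae
          ((ENNReal.measurable_ofReal.comp_aemeasurable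
            (aemeasurable_restrict_of_antitoneOn measurableSet_Ioo
              ((muInf_antitoneOn hf hIf).mono (fun u hu => hu.1)))))
          (ae_of_all _ (fun u hu => ?_))
        exact ENNReal.ofReal_le_ofReal (muInf_antitoneOn hf hIf hu.1 hs hu.2.le)
    _ ≤ ∫⁻ u in Ioo (0:ℝ) s, ENNReal.ofReal (muInf g u) := hmaj s hs
    _ ≤ ∫⁻ u in Ioi (0:ℝ), ENNReal.ofReal (muInf g u) :=
        lintegral_mono_set (fun u hu => hu.1)

lemma core {g : ℝ → ℝ} {f : ℝ → ℝ} (hf : Measurable f)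
    (hIf : ∫⁻ x in Ioi (0:ℝ), ENNReal.ofReal |f x| ≠ ⊤)
    (hmaj : SubmajInf f g)
    (hHM : ∫⁻ u in Ioi (0:ℝ), ENNReal.ofReal (muInf g u) ≠ ⊤)
    {ε : ℝ} (hε : 0 < ε) :
    ∫⁻ x in Ioi (0:ℝ), ENNReal.ofReal
        (max (|f x| - ((∫⁻ u in Ioi (0:ℝ), ENNReal.ofReal (muInf g u)).toReal + 1)/ε) 0) ≤
      ∫⁻ s in Ioo (0:ℝ) ε, ENNReal.ofReal (muInf g s) := by
  set HM := ∫⁻ u in Ioi (0:ℝ), ENNReal.ofReal (muInf g u) with hHMdef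
  set l : ℝ := (HM.toReal + 1)/ε with hl
  have hl0 : 0 < l := by positivity
  have hbound : ∀ s : ℝ, ε ≤ s → muInf f s ≤ l := by
    intro s hεs
    by_contra hc
    push_neg at hc
    have hs0 : 0 < s := lt_of_lt_of_le hε hεs
    have h2 : ENNReal.ofReal l * ENNReal.ofReal ε ≤ HM := by
      calc ENNReal.ofReal l * ENNReal.ofReal ε
          ≤ ENNReal.ofReal (muInf f s) * ENNReal.ofReal s := by
            exact mul_le_mul' (ENNReal.ofReal_le_ofReal hc.le) (ENNReal.ofReal_le_ofReal hεs)
        _ ≤ HM := muInf_mul_le hf hIf hmaj hs0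
    rw [← ENNReal.ofReal_mul hl0.le] at h2
    have h3 : l * ε = HM.toReal + 1 := by rw [hl]; field_simp
    rw [h3] at h2
    have h4 : HM < ENNReal.ofReal (HM.toReal + 1) := by
      conv_lhs => rw [← ENNReal.ofReal_toReal hHM]
      rw [ENNReal.ofReal_lt_ofReal_iff (by positivity)]
      linarith
    exact absurd (lt_of_le_of_lt h2 h4) (lt_irrefl _)
  rw [eq_rearr hf hIf hl0.le]
  have hsplit : Ioi (0:ℝ) = Ioo 0 ε ∪ Ici ε := by
    ext x
    simp only [mem_Ioi, mem_union, mem_Ioo, mem_Ici]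
    constructor
    · intro hx
      rcases lt_or_ge x ε with h | h
      · exact Or.inl ⟨hx, h⟩
      · exact Or.inr h
    · rintro (⟨h1, _⟩ | h); exact h1; linarith
  rw [hsplit, lintegral_union measurableSet_Ici (by
    rw [Set.disjoint_left]; rintro x ⟨_, h2⟩ h3; exact absurd h3 (not_le.2 h2))]
  have hzero : ∫⁻ s in Ici ε, ENNReal.ofReal (max (muInf f s - l) 0) = 0 := by
    rw [setLIntegral_congr_fun (g := fun _ => 0) measurableSet_Ici
      (fun s hs => by
        rw [max_eq_right (by linarith [hbound s hs])]
        exact ENNReal.ofReal_zero), lintegral_zero]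
  rw [hzero, add_zero]
  calc ∫⁻ s in Ioo (0:ℝ) ε, ENNReal.ofReal (max (muInf f s - l) 0)
      ≤ ∫⁻ s in Ioo (0:ℝ) ε, ENNReal.ofReal (muInf f s) := by
        refine lintegral_mono (fun s => ENNReal.ofReal_le_ofReal (max_le ?_ (muInf_nonneg f s)))
        linarith [muInf_nonneg f s]
    _ ≤ ∫⁻ s in Ioo (0:ℝ) ε, ENNReal.ofReal (muInf g s) := hmaj ε hε

end Stmt9

namespace Stmt9

variable {lam : ℕ → ℝ} (hlam : ∀ n : ℕ, (n:ℝ) + 1 ≤ lam n)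

noncomputable def GG (lam : ℕ → ℝ) (t : ℝ) : ℝ :=
  t - 1 + (t+1)⁻¹ + ∑' n, max (t - lam n) 0

lemma base_eq {t : ℝ} (ht : 0 ≤ t) : t - 1 + (t+1)⁻¹ = t^2/(t+1) := by
  have h : t + 1 ≠ 0 := by positivity
  field_simp
  ring

lemma base_nonneg {t : ℝ} (ht : 0 ≤ t) : 0 ≤ t - 1 + (t+1)⁻¹ := by
  rw [base_eq ht]; positivity

lemma base_le {t : ℝ} (ht : 0 ≤ t) : t - 1 + (t+1)⁻¹ ≤ t := by
  have h1 : (t+1)⁻¹ ≤ 1 := by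
    rw [inv_le_one_iff₀]; right; linarith
  linarith

include hlam

lemma term_zero {t : ℝ} {n : ℕ} (h : t ≤ (n:ℝ)) : max (t - lam n) 0 = 0 :=
  max_eq_right (by linarith [hlam n])

lemma summable_term (t : ℝ) : Summable (fun n => max (t - lam n) 0) := by
  refine summable_of_ne_finset_zero (s := Finset.range ⌈t⌉₊) (fun n hn => ?_)
  simp only [Finset.mem_range, not_lt] at hn
  refine term_zero hlam (le_trans (Nat.le_ceil t) ?_)
  exact_mod_cast hn

lemma tsum_term_eq {t : ℝ} {N : ℕ} (h : t ≤ (N:ℝ)) :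
    ∑' n, max (t - lam n) 0 = ∑ n ∈ Finset.range N, max (t - lam n) 0 := by
  refine tsum_eq_sum (fun n hn => ?_)
  simp only [Finset.mem_range, not_lt] at hn
  exact term_zero hlam (le_trans h (by exact_mod_cast hn))

lemma tsum_term_nonneg (t : ℝ) : 0 ≤ ∑' n, max (t - lam n) 0 :=
  tsum_nonneg (fun n => le_max_right _ _)

lemma GG_zero : GG lam 0 = 0 := by
  have h : ∑' n, max (0 - lam n) 0 = 0 := by
    rw [tsum_term_eq hlam (N := 0) (by norm_num), Finset.sum_range_zero]
  rw [GG, h]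
  norm_num

lemma GG_nonneg {t : ℝ} (ht : 0 ≤ t) : 0 ≤ GG lam t :=
  add_nonneg (base_nonneg ht) (tsum_term_nonneg hlam t)

lemma GG_pos {t : ℝ} (ht : 0 < t) : 0 < GG lam t := by
  have h1 : 0 < t - 1 + (t+1)⁻¹ := by
    rw [base_eq ht.le]; positivity
  have := tsum_term_nonneg hlam t
  rw [GG]; linarith

lemma GG_convex : ConvexOn ℝ (Ici 0) (GG lam) := by
  have hbase : ConvexOn ℝ (Ici 0) (fun t : ℝ => t - 1 + (t+1)⁻¹) := by
    have h1 : ConvexOn ℝ (Ioi 0) (fun x : ℝ => x⁻¹) := by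
      have := convexOn_zpow (𝕜 := ℝ) (-1)
      simpa using this
    have h2 : ConvexOn ℝ (Ici 0) (fun t : ℝ => (t+1)⁻¹) := by
      have hA : ConvexOn ℝ ((AffineMap.lineMap (1:ℝ) (2:ℝ)) ⁻¹' (Ioi 0))
          ((fun x : ℝ => x⁻¹) ∘ (AffineMap.lineMap (1:ℝ) (2:ℝ))) :=
        h1.comp_affineMap _
      have hpre : Ici (0:ℝ) ⊆ (AffineMap.lineMap (1:ℝ) (2:ℝ)) ⁻¹' (Ioi 0) := by
        intro t ht
        simp only [mem_preimage, AffineMap.lineMap_apply_ring, mem_Ioi]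
        simp only [mem_Ici] at ht
        nlinarith
      have := hA.subset hpre (convex_Ici 0)
      refine this.congr ?_
      intro t _
      simp [AffineMap.lineMap_apply_ring]
      ring_nf
    have h3 : ConvexOn ℝ (Ici 0) (fun t : ℝ => t - 1) :=
      ⟨convex_Ici 0, by intro x _ y _ a b ha hb hab; simp; nlinarith⟩
    exact h3.add h2
  refine ⟨convex_Ici 0, ?_⟩
  intro x hx y hy a b ha hb hab
  simp only [mem_Ici] at hx hy
  have hterm : ∀ n, max (a * x + b * y - lam n) 0 ≤ a * max (x - lam n) 0 + b * max (y - lam n) 0 := by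
    intro n
    have h1 : a * (x - lam n) ≤ a * max (x - lam n) 0 :=
      mul_le_mul_of_nonneg_left (le_max_left _ _) ha
    have h2 : b * (y - lam n) ≤ b * max (y - lam n) 0 :=
      mul_le_mul_of_nonneg_left (le_max_left _ _) hb
    have h3 : a * x + b * y - lam n = a * (x - lam n) + b * (y - lam n) := by
      linear_combination lam n * hab
    apply max_le
    · linarith
    · exact add_nonneg (mul_nonneg ha (le_max_right _ _)) (mul_nonneg hb (le_max_right _ _))
  have hsum : ∑' n, max (a * x + b * y - lam n) 0 ≤
      a * (∑' n, max (x - lam n) 0) + b * (∑' n, max (y - lam n) 0) := by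
    rw [← tsum_mul_left, ← tsum_mul_left, ← Summable.tsum_add ((summable_term hlam x).mul_left a)
      ((summable_term hlam y).mul_left b)]
    exact Summable.tsum_le_tsum hterm (summable_term hlam _)
      (((summable_term hlam x).mul_left a).add ((summable_term hlam y).mul_left b))
  have hb2 := hbase.2 (mem_Ici.2 hx) (mem_Ici.2 hy) ha hb hab
  simp only [smul_eq_mul] at hb2 ⊢
  rw [GG, GG, GG]
  nlinarith [hsum, hb2]

lemma GG_continuousOn : ContinuousOn (GG lam) (Ici 0) := by
  have hS : Continuous (fun t : ℝ => ∑' n, max (t - lam n) 0) := by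
    rw [continuous_iff_continuousAt]
    intro x
    have hxN : x < (⌈x⌉₊ + 1 : ℕ) := by
      push_cast
      linarith [Nat.le_ceil x]
    refine ContinuousAt.congr (f := fun t => ∑ n ∈ Finset.range (⌈x⌉₊ + 1), max (t - lam n) 0) ?_ ?_
    · exact (continuous_finset_sum _ (fun n _ =>
        (continuous_id.sub continuous_const).max continuous_const)).continuousAt
    · filter_upwards [Iio_mem_nhds hxN] with t ht
      exact (tsum_term_eq hlam (le_of_lt ht)).symm
  have hbase : ContinuousOn (fun t : ℝ => t - 1 + (t+1)⁻¹) (Ici 0) := by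
    refine ContinuousOn.add ((continuous_id.sub continuous_const).continuousOn) ?_
    refine ContinuousOn.inv₀ ((continuous_id.add continuous_const).continuousOn) ?_
    intro t ht
    simp only [mem_Ici] at ht
    positivity
  exact hbase.add hS.continuousOn

lemma GG_tendsto_zero : Tendsto (fun t => GG lam t / t) (𝓝[>] 0) (𝓝 0) := by
  have hev : ∀ᶠ t in 𝓝[>] (0:ℝ), GG lam t / t = t / (t+1) := by
    filter_upwards [Ioo_mem_nhdsGT_of_mem (by norm_num : (0:ℝ) ∈ Ico (0:ℝ) 1)] with t ht
    have h0 : ∑' n, max (t - lam n) 0 = 0 := by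
      rw [tsum_term_eq hlam (N := 1) (by push_cast; linarith [ht.2])]
      rw [Finset.sum_range_one]
      have hl0 := hlam 0
      push_cast at hl0
      exact max_eq_right (by linarith [ht.2])
    have hne : t ≠ 0 := ne_of_gt ht.1
    have hne2 : t + 1 ≠ 0 := ne_of_gt (by linarith [ht.1] : (0:ℝ) < t + 1)
    rw [GG, h0, add_zero, base_eq ht.1.le]
    field_simp
  have hlim : Tendsto (fun t : ℝ => t / (t+1)) (𝓝[>] 0) (𝓝 0) := by
    have h : Tendsto (fun t : ℝ => t / (t+1)) (𝓝 0) (𝓝 (0 / (0+1 : ℝ))) :=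
      (continuousAt_id.div (continuousAt_id.add continuousAt_const) (by norm_num))
    norm_num at h
    exact h.mono_left nhdsWithin_le_nhds
  exact Tendsto.congr' (hev.mono fun t ht => ht.symm) hlim

lemma GG_tendsto_atTop : Tendsto (fun t => GG lam t / t) atTop atTop := by
  rw [tendsto_atTop]
  intro b
  set N := ⌈b⌉₊ with hN
  set c : ℝ := 1 + ∑ n ∈ Finset.range N, lam n with hc
  have hlow : ∀ t : ℝ, 0 ≤ t → ((N:ℝ) + 1) * t - c ≤ GG lam t := by
    intro t ht
    have h1 : t - 1 ≤ t - 1 + (t+1)⁻¹ := by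
      have : (0:ℝ) < (t+1)⁻¹ := by positivity
      linarith
    have h2 : ∑ n ∈ Finset.range N, (t - lam n) ≤ ∑' n, max (t - lam n) 0 := by
      calc ∑ n ∈ Finset.range N, (t - lam n) ≤ ∑ n ∈ Finset.range N, max (t - lam n) 0 :=
            Finset.sum_le_sum (fun n _ => le_max_left _ _)
        _ ≤ ∑' n, max (t - lam n) 0 :=
            Summable.sum_le_tsum _ (fun n _ => le_max_right _ _) (summable_term hlam t)
    rw [GG]
    have h3 : ∑ n ∈ Finset.range N, (t - lam n) = (N:ℝ) * t - ∑ n ∈ Finset.range N, lam n := by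
      rw [Finset.sum_sub_distrib]
      simp [mul_comm]
    nlinarith [h2, h3]
  rw [eventually_atTop]
  refine ⟨max 1 c, fun t ht => ?_⟩
  have ht1 : (1:ℝ) ≤ t := le_trans (le_max_left _ _) ht
  have htc : c ≤ t := le_trans (le_max_right _ _) ht
  have ht0 : 0 < t := by linarith
  have h4 : ((N:ℝ) + 1) - c / t ≤ GG lam t / t := by
    have hl := hlow t ht0.le
    have heq : ((N:ℝ) + 1) - c / t = (((N:ℝ) + 1) * t - c) / t := by
      field_simp
    rw [heq]
    gcongr
  have h5 : c / t ≤ 1 := by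
    rw [div_le_one ht0]
    exact htc
  have h6 : b ≤ (N:ℝ) := Nat.le_ceil b
  linarith

lemma GG_isN : IsNFunction (GG lam) :=
  ⟨GG_continuousOn hlam, GG_convex hlam, fun t ht => GG_nonneg hlam ht, GG_zero hlam,
    fun t ht => GG_pos hlam ht, GG_tendsto_zero hlam, GG_tendsto_atTop hlam⟩

end Stmt9

namespace Stmt9

lemma abs_lintegral_eq (h : ℝ → ℝ) :
    (∫⁻ x in Ioi (0:ℝ), ENNReal.ofReal |h x|) = ∫⁻ x in Ioi (0:ℝ), (‖h x‖₊ : ℝ≥0∞) :=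
  lintegral_congr fun x => by rw [← Real.norm_eq_abs, ofReal_norm, enorm_eq_nnnorm]

lemma If_ne_top {h : ℝ → ℝ} (hi : IntegrableOn h (Ioi 0) volume) :
    ∫⁻ x in Ioi (0:ℝ), ENNReal.ofReal |h x| ≠ ⊤ := by
  rw [abs_lintegral_eq]
  exact hi.2.ne

lemma HM_ne_top {g' : ℝ → ℝ} (hg'meas : Measurable g')
    (hIg : ∫⁻ x in Ioi (0:ℝ), ENNReal.ofReal |g' x| ≠ ⊤) :
    ∫⁻ u in Ioi (0:ℝ), ENNReal.ofReal (muInf g' u) ≠ ⊤ := by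
  have h1 : ∫⁻ u in Ioi (0:ℝ), ENNReal.ofReal (muInf g' u)
      = ∫⁻ u in Ioi (0:ℝ), ENNReal.ofReal (max (muInf g' u - 0) 0) := by
    refine lintegral_congr fun u => ?_
    rw [sub_zero, max_eq_left (muInf_nonneg g' u)]
  have h2 : ∫⁻ x in Ioi (0:ℝ), ENNReal.ofReal (max (|g' x| - 0) 0)
      = ∫⁻ x in Ioi (0:ℝ), ENNReal.ofReal |g' x| := by
    refine lintegral_congr fun x => ?_
    rw [sub_zero, max_eq_left (abs_nonneg _)]
  rw [h1, ← eq_rearr hg'meas hIg le_rfl, h2]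
  exact hIg

end Stmt9


open Stmt9 in

theorem stmt9 (K : Set (ℝ → ℝ))
    (hK : ∀ f ∈ K, IntegrableOn f (Ioi 0) volume)
    (hKb : ∃ C : ℝ, ∀ f ∈ K, ∫ x in Ioi (0:ℝ), |f x| ≤ C)
    (g : ℝ → ℝ) (hg0 : ∀ x ∈ Ioi (0:ℝ), 0 < g x)
    (hgi : IntegrableOn g (Ioi 0) volume)
    (hmaj : ∀ f ∈ K, SubmajInf f g) :
    ∃ G : ℝ → ℝ, IsNFunction G ∧
      ∃ C : ℝ, ∀ f ∈ K,
        ∫⁻ s in Ioi (0:ℝ), ENNReal.ofReal (G |f s|) ≤ ENNReal.ofReal C := by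
  obtain ⟨C, hC⟩ := hKb
  -- measurable representative for g
  set g' : ℝ → ℝ := (hgi.aestronglyMeasurable.mk g) with hg'def
  have hg'meas : Measurable g' := hgi.aestronglyMeasurable.stronglyMeasurable_mk.measurable
  have hgae : g =ᵐ[volume.restrict (Ioi 0)] g' := hgi.aestronglyMeasurable.ae_eq_mk
  have hmug : muInf g = muInf g' := muInf_congr hgae
  have hIg : ∫⁻ x in Ioi (0:ℝ), ENNReal.ofReal |g' x| ≠ ⊤ := by
    have h1 : ∫⁻ x in Ioi (0:ℝ), ENNReal.ofReal |g' x|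
        = ∫⁻ x in Ioi (0:ℝ), ENNReal.ofReal |g x| :=
      lintegral_congr_ae (hgae.mono fun x hx => by dsimp only; rw [hx])
    rw [h1]
    exact If_ne_top hgi
  set HM := ∫⁻ u in Ioi (0:ℝ), ENNReal.ofReal (muInf g' u) with hHMdef
  have hHM : HM ≠ ⊤ := HM_ne_top hg'meas hIg
  -- the tail integrals tend to zero
  have Htend : Tendsto (fun i : ℕ => ∫⁻ s in Ioo (0:ℝ) (1/((i:ℝ)+1)),
      ENNReal.ofReal (muInf g' s)) atTop (𝓝 0) := by
    have h0 : Tendsto (fun i : ℕ => (volume.restrict (Ioi (0:ℝ))) (Ioo (0:ℝ) (1/((i:ℝ)+1))))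
        atTop (𝓝 0) := by
      have heq : ∀ i : ℕ, (volume.restrict (Ioi (0:ℝ))) (Ioo (0:ℝ) (1/((i:ℝ)+1)))
          = ENNReal.ofReal (1/((i:ℝ)+1)) := by
        intro i
        rw [Measure.restrict_apply' measurableSet_Ioi]
        rw [inter_eq_left.2 (fun x hx => hx.1), Real.volume_Ioo, sub_zero]
      simp only [heq]
      have : Tendsto (fun i : ℕ => (1:ℝ)/((i:ℝ)+1)) atTop (𝓝 0) :=
        tendsto_one_div_add_atTop_nhds_zero_nat
      have h2 := (ENNReal.tendsto_ofReal this)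
      simpa using h2
    have h1 := tendsto_setLIntegral_zero (μ := volume.restrict (Ioi (0:ℝ)))
      (f := fun s => ENNReal.ofReal (muInf g' s)) hHM h0
    refine h1.congr fun i => ?_
    rw [Measure.restrict_restrict measurableSet_Ioo,
      inter_eq_left.2 (fun x hx => hx.1)]
  -- choose the sequence lam
  have hchoice : ∀ n : ℕ, ∃ l : ℝ, ((n:ℝ) + 1 ≤ l ∧
      ∀ f ∈ K, ∫⁻ x in Ioi (0:ℝ), ENNReal.ofReal (max (|f x| - l) 0) ≤ 2⁻¹ ^ n) := by
    intro n
    have hpos : (0:ℝ≥0∞) < 2⁻¹ ^ n := by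
      apply ENNReal.pow_pos
      norm_num
    obtain ⟨i, hi⟩ := (Htend.eventually_lt_const hpos).exists
    set ε : ℝ := 1/((i:ℝ)+1) with hε
    have hε0 : 0 < ε := by positivity
    refine ⟨max ((n:ℝ)+1) ((HM.toReal + 1)/ε), le_max_left _ _, fun f hf => ?_⟩
    set f' : ℝ → ℝ := ((hK f hf).aestronglyMeasurable.mk f) with hf'def
    have hf'meas : Measurable f' := (hK f hf).aestronglyMeasurable.stronglyMeasurable_mk.measurable
    have hfae : f =ᵐ[volume.restrict (Ioi 0)] f' := (hK f hf).aestronglyMeasurable.ae_eq_mk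
    have hIf : ∫⁻ x in Ioi (0:ℝ), ENNReal.ofReal |f' x| ≠ ⊤ := by
      have h1 : ∫⁻ x in Ioi (0:ℝ), ENNReal.ofReal |f' x|
          = ∫⁻ x in Ioi (0:ℝ), ENNReal.ofReal |f x| :=
        lintegral_congr_ae (hfae.mono fun x hx => by dsimp only; rw [hx])
      rw [h1]; exact If_ne_top (hK f hf)
    have hmaj' : SubmajInf f' g' := by
      have h := hmaj f hf
      rw [SubmajInf] at h ⊢
      rwa [← muInf_congr hfae, ← hmug]
    have hcore := core hf'meas hIf hmaj' hHM hε0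
    calc ∫⁻ x in Ioi (0:ℝ), ENNReal.ofReal (max (|f x| - max ((n:ℝ)+1) ((HM.toReal + 1)/ε)) 0)
        = ∫⁻ x in Ioi (0:ℝ), ENNReal.ofReal (max (|f' x| - max ((n:ℝ)+1) ((HM.toReal + 1)/ε)) 0) :=
          lintegral_congr_ae (hfae.mono fun x hx => by dsimp only; rw [hx])
      _ ≤ ∫⁻ x in Ioi (0:ℝ), ENNReal.ofReal (max (|f' x| - (HM.toReal + 1)/ε) 0) := by
          refine lintegral_mono fun x => ENNReal.ofReal_le_ofReal (max_le ?_ (le_max_right _ _))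
          have := le_max_right ((n:ℝ)+1) ((HM.toReal + 1)/ε)
          have h2 := le_max_left (|f' x| - (HM.toReal + 1)/ε) (0:ℝ)
          linarith
      _ ≤ ∫⁻ s in Ioo (0:ℝ) ε, ENNReal.ofReal (muInf g' s) := hcore
      _ ≤ 2⁻¹ ^ n := hi.le
  choose lam hlam1 hlam2 using hchoice
  refine ⟨GG lam, GG_isN hlam1, max C 0 + 2, fun f hf => ?_⟩
  set f' : ℝ → ℝ := ((hK f hf).aestronglyMeasurable.mk f) with hf'def
  have hf'meas : Measurable f' := (hK f hf).aestronglyMeasurable.stronglyMeasurable_mk.measurable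
  have hfae : f =ᵐ[volume.restrict (Ioi 0)] f' := (hK f hf).aestronglyMeasurable.ae_eq_mk
  have hstep0 : ∫⁻ s in Ioi (0:ℝ), ENNReal.ofReal (GG lam |f s|)
      = ∫⁻ s in Ioi (0:ℝ), ENNReal.ofReal (GG lam |f' s|) :=
    lintegral_congr_ae (hfae.mono fun x hx => by dsimp only; rw [hx])
  have hdecomp : ∀ x : ℝ, ENNReal.ofReal (GG lam |f' x|)
      = ENNReal.ofReal (|f' x| - 1 + (|f' x|+1)⁻¹)
        + ∑' n, ENNReal.ofReal (max (|f' x| - lam n) 0) := by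
    intro x
    rw [GG, ENNReal.ofReal_add (base_nonneg (abs_nonneg _)) (tsum_term_nonneg hlam1 _),
      ENNReal.ofReal_tsum_of_nonneg (fun n => le_max_right _ _) (summable_term hlam1 _)]
  have hAmeas : Measurable fun x => ENNReal.ofReal (|f' x| - 1 + (|f' x|+1)⁻¹) := by
    have : Measurable fun u : ℝ => u - 1 + (u+1)⁻¹ :=
      (measurable_id.sub measurable_const).add ((measurable_id.add measurable_const).inv)
    exact (this.comp hf'meas.abs).ennreal_ofReal
  have hsplit : ∫⁻ s in Ioi (0:ℝ), ENNReal.ofReal (GG lam |f' s|)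
      = (∫⁻ x in Ioi (0:ℝ), ENNReal.ofReal (|f' x| - 1 + (|f' x|+1)⁻¹))
        + ∑' n, ∫⁻ x in Ioi (0:ℝ), ENNReal.ofReal (max (|f' x| - lam n) 0) := by
    rw [lintegral_congr hdecomp, lintegral_add_left hAmeas]
    congr 1
    exact lintegral_tsum fun n =>
      ((hf'meas.abs.sub measurable_const).max measurable_const).ennreal_ofReal.aemeasurable
  have hA : (∫⁻ x in Ioi (0:ℝ), ENNReal.ofReal (|f' x| - 1 + (|f' x|+1)⁻¹))
      ≤ ENNReal.ofReal (max C 0) := by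
    calc (∫⁻ x in Ioi (0:ℝ), ENNReal.ofReal (|f' x| - 1 + (|f' x|+1)⁻¹))
        ≤ ∫⁻ x in Ioi (0:ℝ), ENNReal.ofReal |f' x| :=
          lintegral_mono fun x => ENNReal.ofReal_le_ofReal (base_le (abs_nonneg _))
      _ = ∫⁻ x in Ioi (0:ℝ), ENNReal.ofReal |f x| :=
          lintegral_congr_ae (hfae.mono fun x hx => by dsimp only; rw [hx])
      _ = ENNReal.ofReal (∫ x in Ioi (0:ℝ), |f x|) :=
          (ofReal_integral_eq_lintegral_ofReal (hK f hf).abs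
            (ae_of_all _ fun x => abs_nonneg _)).symm
      _ ≤ ENNReal.ofReal (max C 0) :=
          ENNReal.ofReal_le_ofReal (le_trans (hC f hf) (le_max_left _ _))
  have hB : ∑' n, ∫⁻ x in Ioi (0:ℝ), ENNReal.ofReal (max (|f' x| - lam n) 0) ≤ 2 := by
    calc ∑' n, ∫⁻ x in Ioi (0:ℝ), ENNReal.ofReal (max (|f' x| - lam n) 0)
        = ∑' n, ∫⁻ x in Ioi (0:ℝ), ENNReal.ofReal (max (|f x| - lam n) 0) := by
          refine tsum_congr fun n => lintegral_congr_ae (hfae.mono fun x hx => by dsimp only; rw [hx])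
      _ ≤ ∑' n : ℕ, (2⁻¹ : ℝ≥0∞) ^ n := Summable.tsum_le_tsum (fun n => hlam2 n f hf)
          ENNReal.summable ENNReal.summable
      _ = 2 := by rw [ENNReal.tsum_geometric, ENNReal.one_sub_inv_two, inv_inv]
  rw [hstep0, hsplit]
  calc (∫⁻ x in Ioi (0:ℝ), ENNReal.ofReal (|f' x| - 1 + (|f' x|+1)⁻¹))
        + ∑' n, ∫⁻ x in Ioi (0:ℝ), ENNReal.ofReal (max (|f' x| - lam n) 0)
      ≤ ENNReal.ofReal (max C 0) + 2 := add_le_add hA hB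
    _ = ENNReal.ofReal (max C 0 + 2) := by
        rw [ENNReal.ofReal_add (le_max_right _ _) (by norm_num : (0:ℝ) ≤ 2)]
        norm_num
end

section
/- Let g ∈ L¹(0,1) be positive and let K = {f ∈ L¹(0,1) : |f| ≺≺ g} be the orbit of g. Then there exists an N-function G with G(t)/t → ∞ as t → ∞ such that sup{∫_0^1 G(|f(s)|) ds : f ∈ K} ≤ ∫_0^1 G(g(s)) ds < ∞. -/
open MeasureTheory Set Filter Topology

noncomputable def distFn (h : ℝ → ℝ) (u : ℝ) : ENNReal :=
  volume {x | x ∈ Ioo (0:ℝ) 1 ∧ u < |h x|}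

lemma mu01_eq_sInf (h : ℝ → ℝ) (t : ℝ) :
    mu01 h t = sInf {s : ℝ | 0 ≤ s ∧ distFn h s ≤ ENNReal.ofReal t} := rfl

lemma distFn_set_eq (h : ℝ → ℝ) (u : ℝ) :
    {x | x ∈ Ioo (0:ℝ) 1 ∧ u < |h x|} = {x | u < |h x|} ∩ Ioo (0:ℝ) 1 := by
  ext x; simp [and_comm]

lemma distFn_antitone (h : ℝ → ℝ) : Antitone (distFn h) := by
  intro u v huv
  exact measure_mono (fun x hx => ⟨hx.1, lt_of_le_of_lt huv hx.2⟩)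

lemma distFn_le_one (h : ℝ → ℝ) (u : ℝ) : distFn h u ≤ 1 := by
  have : distFn h u ≤ volume (Ioo (0:ℝ) 1) := measure_mono (fun x hx => hx.1)
  simpa using this

lemma distFn_ne_top (h : ℝ → ℝ) (u : ℝ) : distFn h u ≠ ⊤ :=
  ne_of_lt (lt_of_le_of_lt (distFn_le_one h u) (by norm_num))

lemma distFn_congr {h h' : ℝ → ℝ}
    (hae : h =ᵐ[volume.restrict (Ioo (0:ℝ) 1)] h') (u : ℝ) : distFn h u = distFn h' u := by
  have key : ∀ (a b : ℝ → ℝ), a =ᵐ[volume.restrict (Ioo (0:ℝ) 1)] b →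
      distFn a u ≤ distFn b u := by
    intro a b hab
    have hN : volume ({x | a x ≠ b x} ∩ Ioo (0:ℝ) 1) = 0 := by
      have := hab
      rw [Filter.EventuallyEq, ae_iff, Measure.restrict_apply' measurableSet_Ioo] at this
      simpa using this
    have hsub : {x | x ∈ Ioo (0:ℝ) 1 ∧ u < |a x|} ⊆
        {x | x ∈ Ioo (0:ℝ) 1 ∧ u < |b x|} ∪ ({x | a x ≠ b x} ∩ Ioo (0:ℝ) 1) := by
      intro x hx
      by_cases hxe : a x = b x
      · exact Or.inl ⟨hx.1, hxe ▸ hx.2⟩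
      · exact Or.inr ⟨hxe, hx.1⟩
    calc distFn a u ≤ _ := measure_mono hsub
      _ ≤ distFn b u + volume ({x | a x ≠ b x} ∩ Ioo (0:ℝ) 1) := measure_union_le _ _
      _ = distFn b u := by rw [hN, add_zero]
  exact le_antisymm (key h h' hae) (key h' h hae.symm)

lemma mu01_congr {h h' : ℝ → ℝ}
    (hae : h =ᵐ[volume.restrict (Ioo (0:ℝ) 1)] h') : mu01 h = mu01 h' := by
  funext t
  rw [mu01_eq_sInf, mu01_eq_sInf]
  congr 1
  ext s
  simp only [mem_setOf_eq, distFn_congr hae]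

lemma distFn_measurableSet {h : ℝ → ℝ} (hm : Measurable h) (u : ℝ) :
    MeasurableSet {x | x ∈ Ioo (0:ℝ) 1 ∧ u < |h x|} := by
  rw [distFn_set_eq]
  exact (measurableSet_lt measurable_const hm.abs).inter measurableSet_Ioo

lemma distFn_tendsto_zero {h : ℝ → ℝ} (hm : Measurable h) :
    Tendsto (fun n : ℕ => distFn h n) atTop (𝓝 0) := by
  have hA : Antitone (fun n : ℕ => {x | x ∈ Ioo (0:ℝ) 1 ∧ (n:ℝ) < |h x|}) := by
    intro m n hmn x hx
    exact ⟨hx.1, lt_of_le_of_lt (by exact_mod_cast Nat.cast_le.mpr hmn) hx.2⟩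
  have hI : (⋂ n : ℕ, {x | x ∈ Ioo (0:ℝ) 1 ∧ (n:ℝ) < |h x|}) = ∅ := by
    ext x
    simp only [mem_iInter, mem_setOf_eq, mem_empty_iff_false, iff_false, not_forall]
    obtain ⟨n, hn⟩ := exists_nat_ge |h x|
    exact ⟨n, fun hx => absurd hx.2 (not_lt.mpr hn)⟩
  have := tendsto_measure_iInter_atTop
    (μ := volume) (s := fun n : ℕ => {x | x ∈ Ioo (0:ℝ) 1 ∧ (n:ℝ) < |h x|})
    (fun n => (distFn_measurableSet hm n).nullMeasurableSet) hA ⟨0, by simpa [distFn] using distFn_ne_top h 0⟩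
  rw [hI] at this
  simpa [distFn, Function.comp_def] using this

lemma distFn_right_cont {h : ℝ → ℝ} (u : ℝ) {c : ENNReal}
    (hc : c < distFn h u) : ∃ δ : ℝ, 0 < δ ∧ c < distFn h (u + δ) := by
  have hmono : Monotone (fun k : ℕ => {x | x ∈ Ioo (0:ℝ) 1 ∧ u + ((k:ℝ)+1)⁻¹ < |h x|}) := by
    intro m n hmn x hx
    refine ⟨hx.1, lt_of_le_of_lt ?_ hx.2⟩
    have hmn' : (m:ℝ) ≤ n := Nat.cast_le.mpr hmn
    have : ((n:ℝ)+1)⁻¹ ≤ ((m:ℝ)+1)⁻¹ := by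
      apply inv_anti₀ (by positivity)
      linarith
    linarith
  have hU : (⋃ k : ℕ, {x | x ∈ Ioo (0:ℝ) 1 ∧ u + ((k:ℝ)+1)⁻¹ < |h x|})
      = {x | x ∈ Ioo (0:ℝ) 1 ∧ u < |h x|} := by
    ext x
    simp only [mem_iUnion, mem_setOf_eq]
    constructor
    · rintro ⟨k, hk1, hk2⟩
      have hp : (0:ℝ) < ((k:ℝ)+1)⁻¹ := by positivity
      have : u ≤ u + ((k:ℝ)+1)⁻¹ := by linarith
      exact ⟨hk1, lt_of_le_of_lt this hk2⟩
    · rintro ⟨hx1, hx2⟩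
      obtain ⟨k, hk⟩ := exists_nat_one_div_lt (sub_pos.mpr hx2)
      refine ⟨k, hx1, ?_⟩
      rw [one_div] at hk
      linarith
  have := hmono.measure_iUnion (μ := volume)
  rw [hU] at this
  have hc' : c < ⨆ k : ℕ, volume {x | x ∈ Ioo (0:ℝ) 1 ∧ u + ((k:ℝ)+1)⁻¹ < |h x|} := by
    rw [← this]; exact hc
  obtain ⟨k, hk⟩ := lt_iSup_iff.mp hc'
  exact ⟨((k:ℝ)+1)⁻¹, by positivity, hk⟩

lemma mu01_nonneg (h : ℝ → ℝ) (t : ℝ) : 0 ≤ mu01 h t := by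
  rw [mu01_eq_sInf]
  exact Real.sInf_nonneg (fun s hs => hs.1)

lemma mu01_le {h : ℝ → ℝ} {t u : ℝ} (hu : 0 ≤ u) (hD : distFn h u ≤ ENNReal.ofReal t) :
    mu01 h t ≤ u := by
  rw [mu01_eq_sInf]
  exact csInf_le ⟨0, fun s hs => hs.1⟩ ⟨hu, hD⟩

lemma lt_mu01 {h : ℝ → ℝ} (hm : Measurable h) {t u : ℝ} (ht : 0 < t)
    (hD : ENNReal.ofReal t < distFn h u) : u < mu01 h t := by
  obtain ⟨δ, hδ, hδ2⟩ := distFn_right_cont u hD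
  have hne : {s : ℝ | 0 ≤ s ∧ distFn h s ≤ ENNReal.ofReal t}.Nonempty := by
    have h0 : (0:ENNReal) < ENNReal.ofReal t := ENNReal.ofReal_pos.mpr ht
    have := (distFn_tendsto_zero hm).eventually (gt_mem_nhds h0)
    obtain ⟨n, hn⟩ := this.exists
    exact ⟨n, Nat.cast_nonneg n, le_of_lt hn⟩
  rw [mu01_eq_sInf]
  have : u + δ ≤ sInf {s : ℝ | 0 ≤ s ∧ distFn h s ≤ ENNReal.ofReal t} := by
    apply le_csInf hne
    intro v hv
    by_contra hlt
    push_neg at hlt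
    have : distFn h (u + δ) ≤ distFn h v := distFn_antitone h (le_of_lt hlt)
    exact absurd (le_trans this hv.2) (not_le.mpr hδ2)
  linarith

lemma lt_mu01_iff {h : ℝ → ℝ} (hm : Measurable h) {t u : ℝ} (ht : 0 < t) (hu : 0 ≤ u) :
    u < mu01 h t ↔ ENNReal.ofReal t < distFn h u := by
  constructor
  · intro hlt
    by_contra hc
    push_neg at hc
    exact absurd (mu01_le hu hc) (not_le.mpr hlt)
  · exact lt_mu01 hm ht

lemma mu01_set_nonempty {h : ℝ → ℝ} (hm : Measurable h) {t : ℝ} (ht : 0 < t) :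
    {s : ℝ | 0 ≤ s ∧ distFn h s ≤ ENNReal.ofReal t}.Nonempty := by
  have h0 : (0:ENNReal) < ENNReal.ofReal t := ENNReal.ofReal_pos.mpr ht
  have := (distFn_tendsto_zero hm).eventually (gt_mem_nhds h0)
  obtain ⟨n, hn⟩ := this.exists
  exact ⟨n, Nat.cast_nonneg n, le_of_lt hn⟩

lemma mu01_antitoneOn {h : ℝ → ℝ} (hm : Measurable h) :
    AntitoneOn (mu01 h) (Ioi (0:ℝ)) := by
  intro s hs t _ hst
  rw [mu01_eq_sInf, mu01_eq_sInf]
  apply csInf_le_csInf ⟨0, fun v hv => hv.1⟩ (mu01_set_nonempty hm hs)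
  intro v hv
  exact ⟨hv.1, le_trans hv.2 (ENNReal.ofReal_le_ofReal hst)⟩

lemma mu01_aemeasurable {h : ℝ → ℝ} (hm : Measurable h) :
    AEMeasurable (mu01 h) (volume.restrict (Ioo (0:ℝ) 1)) := by
  exact aemeasurable_restrict_of_antitoneOn (μ := volume) measurableSet_Ioo
    ((mu01_antitoneOn hm).mono (Ioo_subset_Ioi_self (a := (1:ℝ)) (b := 0)))

/-- distribution function of the decreasing rearrangement equals that of |h| -/
lemma mu01_dist {h : ℝ → ℝ} (hm : Measurable h) {u : ℝ} (hu : 0 ≤ u) :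
    volume {s | s ∈ Ioo (0:ℝ) 1 ∧ u < mu01 h s} = distFn h u := by
  have htR : (distFn h u).toReal ≤ 1 := by
    have := ENNReal.toReal_mono (by norm_num) (distFn_le_one h u)
    simpa using this
  have hset : {s | s ∈ Ioo (0:ℝ) 1 ∧ u < mu01 h s} = Ioo 0 ((distFn h u).toReal) := by
    ext s
    simp only [mem_setOf_eq, mem_Ioo]
    constructor
    · rintro ⟨⟨hs0, _⟩, hlt⟩
      refine ⟨hs0, ?_⟩
      have := (lt_mu01_iff hm hs0 hu).mp hlt
      exact (ENNReal.ofReal_lt_iff_lt_toReal (le_of_lt hs0) (distFn_ne_top h u)).mp this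
    · rintro ⟨hs0, hst⟩
      have hs1 : s < 1 := lt_of_lt_of_le hst htR
      refine ⟨⟨hs0, hs1⟩, ?_⟩
      exact (lt_mu01_iff hm hs0 hu).mpr
        ((ENNReal.ofReal_lt_iff_lt_toReal (le_of_lt hs0) (distFn_ne_top h u)).mpr hst)
  rw [hset, Real.volume_Ioo, sub_zero, ENNReal.ofReal_toReal (distFn_ne_top h u)]

/-- Layer cake for a nonnegative a.e.-measurable function on (0,1). -/
lemma layercake (h : ℝ → ℝ) (hm : AEMeasurable h (volume.restrict (Ioo (0:ℝ) 1)))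
    (hnn : ∀ x, 0 ≤ h x) (a : ℝ) :
    ∫⁻ x in Ioo (0:ℝ) 1, ENNReal.ofReal (max (h x - a) 0) =
      ∫⁻ u in Ioi (0:ℝ), volume {x | x ∈ Ioo (0:ℝ) 1 ∧ a + u < h x} := by
  have hmble : AEMeasurable (fun x => max (h x - a) 0) (volume.restrict (Ioo (0:ℝ) 1)) :=
    (hm.sub aemeasurable_const).max aemeasurable_const
  rw [lintegral_eq_lintegral_meas_lt (f := fun x => max (h x - a) 0) (volume.restrict (Ioo (0:ℝ) 1))
      (Filter.Eventually.of_forall (fun x => le_max_right _ _)) hmble]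
  apply setLIntegral_congr_fun measurableSet_Ioi
  intro t ht
  dsimp only
  have hseteq : {x : ℝ | t < max (h x - a) 0} ∩ Ioo (0:ℝ) 1
      = {x | x ∈ Ioo (0:ℝ) 1 ∧ a + t < h x} := by
    ext x
    simp only [mem_inter_iff, mem_setOf_eq, lt_max_iff]
    constructor
    · rintro ⟨hx1, hx2⟩
      rcases hx1 with h1 | h1
      · exact ⟨hx2, by linarith⟩
      · exact absurd ht (not_lt.mpr (le_of_lt h1))
    · rintro ⟨hx1, hx2⟩
      exact ⟨Or.inl (by linarith), hx1⟩
  rw [Measure.restrict_apply' measurableSet_Ioo, hseteq]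

lemma T_eq {h : ℝ → ℝ} (hm : Measurable h) {a : ℝ} (ha : 0 ≤ a) :
    ∫⁻ x in Ioo (0:ℝ) 1, ENNReal.ofReal (max (|h x| - a) 0) =
      ∫⁻ s in Ioo (0:ℝ) 1, ENNReal.ofReal (max (mu01 h s - a) 0) := by
  rw [layercake (fun x => |h x|) (hm.abs.aemeasurable) (fun x => abs_nonneg _) a,
    layercake (mu01 h) (mu01_aemeasurable hm) (fun s => mu01_nonneg h s) a]
  apply setLIntegral_congr_fun measurableSet_Ioi
  intro u hu
  dsimp only
  have hau : 0 ≤ a + u := by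
    have : (0:ℝ) < u := hu
    linarith
  rw [mu01_dist hm hau]
  rfl

lemma maj {f g : ℝ → ℝ} (hfm : Measurable f)
    (hsub : ∀ t ∈ Ioc (0:ℝ) 1,
      ∫⁻ s in Ioo (0:ℝ) t, ENNReal.ofReal (mu01 f s) ≤
        ∫⁻ s in Ioo (0:ℝ) t, ENNReal.ofReal (mu01 g s))
    {a : ℝ} (ha : 0 ≤ a) :
    ∫⁻ s in Ioo (0:ℝ) 1, ENNReal.ofReal (max (mu01 f s - a) 0) ≤
      ∫⁻ s in Ioo (0:ℝ) 1, ENNReal.ofReal (max (mu01 g s - a) 0) := by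
  set t₀ : ℝ := (distFn f a).toReal with ht₀def
  have ht₀0 : 0 ≤ t₀ := ENNReal.toReal_nonneg
  have ht₀1 : t₀ ≤ 1 := by
    have := ENNReal.toReal_mono (by norm_num) (distFn_le_one f a)
    simpa using this
  -- integrand vanishes off Ioo 0 t₀
  have hvanish : ∀ s ∈ Ioo (0:ℝ) 1 \ Iio t₀, ENNReal.ofReal (max (mu01 f s - a) 0) = 0 := by
    intro s hs
    have hst : t₀ ≤ s := not_lt.mp hs.2
    have hD : distFn f a ≤ ENNReal.ofReal s := by
      calc distFn f a = ENNReal.ofReal t₀ := (ENNReal.ofReal_toReal (distFn_ne_top f a)).symm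
        _ ≤ ENNReal.ofReal s := ENNReal.ofReal_le_ofReal hst
    have : mu01 f s ≤ a := mu01_le ha hD
    rw [max_eq_right (by linarith), ENNReal.ofReal_zero]
  have hinter : Ioo (0:ℝ) 1 ∩ Iio t₀ = Ioo 0 t₀ := by
    ext s; simp only [mem_inter_iff, mem_Ioo, mem_Iio]
    constructor
    · rintro ⟨⟨h1, _⟩, h3⟩; exact ⟨h1, h3⟩
    · rintro ⟨h1, h2⟩; exact ⟨⟨h1, lt_of_lt_of_le h2 ht₀1⟩, h2⟩
  have hsplit : ∫⁻ s in Ioo (0:ℝ) 1, ENNReal.ofReal (max (mu01 f s - a) 0) =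
      ∫⁻ s in Ioo (0:ℝ) t₀, ENNReal.ofReal (max (mu01 f s - a) 0) := by
    rw [← lintegral_inter_add_diff (B := Iio t₀) _ (Ioo (0:ℝ) 1) measurableSet_Iio, hinter]
    have hzero : ∫⁻ s in Ioo (0:ℝ) 1 \ Iio t₀, ENNReal.ofReal (max (mu01 f s - a) 0) = 0 := by
      rw [setLIntegral_congr_fun (measurableSet_Ioo.diff measurableSet_Iio)
        hvanish]
      simp
    rw [hzero, add_zero]
  rw [hsplit]
  rcases eq_or_lt_of_le ht₀0 with h0 | h0
  · rw [← h0]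
    simp
  -- now t₀ > 0
  have hmem : t₀ ∈ Ioc (0:ℝ) 1 := ⟨h0, ht₀1⟩
  have hptf : ∀ s ∈ Ioo (0:ℝ) t₀, ENNReal.ofReal (mu01 f s)
      = ENNReal.ofReal (max (mu01 f s - a) 0) + ENNReal.ofReal a := by
    intro s hs
    have hlt : a < mu01 f s := by
      apply lt_mu01 hfm hs.1
      rw [← ENNReal.ofReal_toReal (distFn_ne_top f a)]
      exact ENNReal.ofReal_lt_ofReal_iff_of_nonneg (le_of_lt hs.1) |>.mpr hs.2
    rw [max_eq_left (by linarith), ← ENNReal.ofReal_add (by linarith) ha]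
    ring_nf
  have e1 : ∫⁻ s in Ioo (0:ℝ) t₀, ENNReal.ofReal (mu01 f s)
      = (∫⁻ s in Ioo (0:ℝ) t₀, ENNReal.ofReal (max (mu01 f s - a) 0))
        + ENNReal.ofReal a * volume (Ioo (0:ℝ) t₀) := by
    rw [setLIntegral_congr_fun measurableSet_Ioo hptf,
      lintegral_add_right _ measurable_const, setLIntegral_const]
  have e2 : ∫⁻ s in Ioo (0:ℝ) t₀, ENNReal.ofReal (mu01 g s)
      ≤ (∫⁻ s in Ioo (0:ℝ) t₀, ENNReal.ofReal (max (mu01 g s - a) 0))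
        + ENNReal.ofReal a * volume (Ioo (0:ℝ) t₀) := by
    rw [← setLIntegral_const, ← lintegral_add_right _ measurable_const]
    apply lintegral_mono
    intro s
    calc ENNReal.ofReal (mu01 g s) ≤ ENNReal.ofReal (max (mu01 g s - a) 0 + a) := by
          apply ENNReal.ofReal_le_ofReal
          rcases le_or_gt (mu01 g s) a with h | h
          · calc mu01 g s ≤ a := h
              _ ≤ max (mu01 g s - a) 0 + a := by
                have := le_max_right (mu01 g s - a) (0:ℝ); linarith
          · rw [max_eq_left (by linarith)]; linarith
      _ = ENNReal.ofReal (max (mu01 g s - a) 0) + ENNReal.ofReal a :=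
          ENNReal.ofReal_add (le_max_right _ _) ha
  have hfin : ENNReal.ofReal a * volume (Ioo (0:ℝ) t₀) ≠ ⊤ :=
    ENNReal.mul_ne_top ENNReal.ofReal_ne_top (by simp [Real.volume_Ioo])
  have hchain : (∫⁻ s in Ioo (0:ℝ) t₀, ENNReal.ofReal (max (mu01 f s - a) 0))
        + ENNReal.ofReal a * volume (Ioo (0:ℝ) t₀)
      ≤ (∫⁻ s in Ioo (0:ℝ) t₀, ENNReal.ofReal (max (mu01 g s - a) 0))
        + ENNReal.ofReal a * volume (Ioo (0:ℝ) t₀) := by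
    rw [← e1]
    exact le_trans (hsub t₀ hmem) e2
  have := (ENNReal.add_le_add_iff_right hfin).mp hchain
  calc ∫⁻ s in Ioo (0:ℝ) t₀, ENNReal.ofReal (max (mu01 f s - a) 0)
      ≤ ∫⁻ s in Ioo (0:ℝ) t₀, ENNReal.ofReal (max (mu01 g s - a) 0) := this
    _ ≤ ∫⁻ s in Ioo (0:ℝ) 1, ENNReal.ofReal (max (mu01 g s - a) 0) :=
        lintegral_mono_set (Ioo_subset_Ioo le_rfl ht₀1)

/-- generic sum of hinge functions -/
noncomputable def hingeSum (c b : ℕ → ℝ) (x : ℝ) : ℝ := ∑' n, c n * max (x - b n) 0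

section hinge
variable {c b : ℕ → ℝ} (hc : ∀ n, 0 ≤ c n) (hb : ∀ n, 0 ≤ b n)
  (hsum : ∀ x : ℝ, Summable fun n => c n * max (x - b n) 0)

include hc in
lemma hinge_term_nonneg (n : ℕ) (x : ℝ) : 0 ≤ c n * max (x - b n) 0 :=
  mul_nonneg (hc n) (le_max_right _ _)

include hc in
lemma hingeSum_nonneg (x : ℝ) : 0 ≤ hingeSum c b x :=
  tsum_nonneg (fun n => hinge_term_nonneg hc n x)

include hb in
lemma hingeSum_zero : hingeSum c b 0 = 0 := by
  unfold hingeSum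
  have : ∀ n : ℕ, c n * max ((0:ℝ) - b n) 0 = 0 := by
    intro n
    rw [max_eq_right (by simpa using hb n), mul_zero]
  simp only [this, tsum_zero]

include hc hsum in
lemma hingeSum_mono : Monotone (hingeSum c b) := by
  intro x y hxy
  apply Summable.tsum_le_tsum _ (hsum x) (hsum y)
  intro n
  apply mul_le_mul_of_nonneg_left _ (hc n)
  exact max_le_max (by linarith) le_rfl

include hc hsum in
lemma hingeSum_convexOn : ConvexOn ℝ univ (hingeSum c b) := by
  refine ⟨convex_univ, ?_⟩
  intro x _ y _ p q hp hq hpq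
  simp only [smul_eq_mul]
  have hterm : ∀ n, c n * max (p * x + q * y - b n) 0
      ≤ p * (c n * max (x - b n) 0) + q * (c n * max (y - b n) 0) := by
    intro n
    have h1 : max (p * x + q * y - b n) 0 ≤ p * max (x - b n) 0 + q * max (y - b n) 0 := by
      apply max_le
      · have e : p * x + q * y - b n = p * (x - b n) + q * (y - b n) := by
          have h1 : p + q = 1 := hpq
          linear_combination (b n) * h1
        rw [e]
        gcongr
        · exact le_max_left _ _
        · exact le_max_left _ _
      · positivity
    calc c n * max (p * x + q * y - b n) 0
        ≤ c n * (p * max (x - b n) 0 + q * max (y - b n) 0) :=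
          mul_le_mul_of_nonneg_left h1 (hc n)
      _ = p * (c n * max (x - b n) 0) + q * (c n * max (y - b n) 0) := by ring
  calc hingeSum c b (p * x + q * y)
      ≤ ∑' n, (p * (c n * max (x - b n) 0) + q * (c n * max (y - b n) 0)) := by
        apply Summable.tsum_le_tsum hterm (hsum _)
        exact ((hsum x).mul_left p).add ((hsum y).mul_left q)
    _ = p * hingeSum c b x + q * hingeSum c b y := by
        rw [Summable.tsum_add ((hsum x).mul_left p) ((hsum y).mul_left q),
          tsum_mul_left, tsum_mul_left]
        rfl
end hinge

/-- local finiteness: if `b n ≥ n + 1` then on `(-∞, m]` the sum is a finite sum -/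
lemma hingeSum_eq_finsum {c b : ℕ → ℝ} (hb1 : ∀ n : ℕ, ((n:ℝ) + 1) ≤ b n) (m : ℕ) (x : ℝ)
    (hx : x ≤ m) : hingeSum c b x = ∑ n ∈ Finset.range m, c n * max (x - b n) 0 := by
  apply tsum_eq_sum
  intro n hn
  have hn' : (m:ℝ) ≤ n := by exact_mod_cast Nat.le_of_not_lt (fun h => hn (Finset.mem_range.mpr h))
  have : x ≤ b n := le_trans hx (le_trans (by linarith) (hb1 n))
  rw [max_eq_right (by linarith), mul_zero]

lemma hingeSum_summable_of_lb {c b : ℕ → ℝ} (hb1 : ∀ n : ℕ, ((n:ℝ) + 1) ≤ b n) (x : ℝ) :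
    Summable fun n => c n * max (x - b n) 0 := by
  apply summable_of_ne_finset_zero (s := Finset.range ⌈max x 0⌉₊)
  intro n hn
  have hn' : (⌈max x 0⌉₊ : ℝ) ≤ n := by
    exact_mod_cast Nat.le_of_not_lt (fun h => hn (Finset.mem_range.mpr h))
  have hx : x ≤ ⌈max x 0⌉₊ := le_trans (le_max_left _ _) (Nat.le_ceil _)
  have hbn : ((n:ℝ)) + 1 ≤ b n := hb1 n
  have : x ≤ b n := by linarith
  rw [max_eq_right (by linarith), mul_zero]

lemma hingeSum_continuous_of_lb {c b : ℕ → ℝ} (hb1 : ∀ n : ℕ, ((n:ℝ) + 1) ≤ b n) :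
    Continuous (hingeSum c b) := by
  rw [continuous_iff_continuousAt]
  intro x
  set m : ℕ := ⌈max x 0⌉₊ + 1 with hm
  have hxm : x < m := by
    have : x ≤ ⌈max x 0⌉₊ := le_trans (le_max_left _ _) (Nat.le_ceil _)
    rw [hm]
    push_cast
    linarith
  have heq : hingeSum c b =ᶠ[nhds x] fun y => ∑ n ∈ Finset.range m, c n * max (y - b n) 0 := by
    filter_upwards [Iio_mem_nhds hxm] with y hy
    exact hingeSum_eq_finsum hb1 m y (le_of_lt hy)
  apply ContinuousAt.congr _ heq.symm
  apply Continuous.continuousAt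
  apply continuous_finset_sum
  intro n _
  exact continuous_const.mul ((continuous_id.sub continuous_const).max continuous_const)

/-- the "small" weights -/
noncomputable def csmall : ℕ → ℝ := fun k => (1/2:ℝ)^(k+1)

lemma csmall_nonneg (k : ℕ) : 0 ≤ csmall k := by unfold csmall; positivity

lemma csmall_summable : Summable csmall := by
  have : Summable (fun k : ℕ => (1/2:ℝ) * (1/2)^k) :=
    (summable_geometric_of_lt_one (by norm_num) (by norm_num)).mul_left _
  apply this.congr
  intro k
  unfold csmall
  ring

lemma tsum_csmall : ∑' k, csmall k = 1 := by
  have h2 : ∑' k : ℕ, (1/2:ℝ)^k = 2 := by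
    rw [tsum_geometric_of_lt_one (by norm_num) (by norm_num)]
    norm_num
  have : ∑' k : ℕ, csmall k = ∑' k : ℕ, (1/2:ℝ) * (1/2)^k := by
    apply tsum_congr; intro k; unfold csmall; ring
  rw [this, tsum_mul_left, h2]
  norm_num

lemma csmall_summable_mul (t : ℝ) : Summable (fun k => csmall k * t) :=
  csmall_summable.mul_right t

lemma hingeSum_small_summable (x : ℝ) : Summable fun k => csmall k * max (x - csmall k) 0 := by
  apply Summable.of_nonneg_of_le
    (fun k => mul_nonneg (csmall_nonneg k) (le_max_right _ _))
    (fun k => ?_) (csmall_summable_mul (max x 0))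
  apply mul_le_mul_of_nonneg_left _ (csmall_nonneg k)
  apply max_le (by nlinarith [csmall_nonneg k, le_max_left x 0]) (le_max_right x 0)

lemma hingeSum_small_le (m : ℕ) {t : ℝ} (ht0 : 0 ≤ t) (htm : t ≤ (1/2:ℝ)^m) :
    hingeSum csmall csmall t ≤ (1/2:ℝ)^m * t := by
  set β : ℕ → ℝ := fun k => if k < m then 0 else csmall k * t with hβ
  have hβsum : Summable β := by
    apply Summable.of_nonneg_of_le _ _ (csmall_summable_mul t)
    · intro k
      by_cases h : k < m <;> simp [hβ, h, mul_nonneg (csmall_nonneg k) ht0]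
    · intro k
      by_cases h : k < m <;> simp [hβ, h, mul_nonneg (csmall_nonneg k) ht0]
  have hle : hingeSum csmall csmall t ≤ ∑' k, β k := by
    apply Summable.tsum_le_tsum _ (hingeSum_small_summable t) hβsum
    intro k
    by_cases h : k < m
    · have hkb : (1/2:ℝ)^m ≤ csmall k := by
        unfold csmall
        exact pow_le_pow_of_le_one (by norm_num) (by norm_num) h
      have : t ≤ csmall k := le_trans htm hkb
      simp [hβ, h, max_eq_right (by linarith : t - csmall k ≤ 0)]
    · simp only [hβ, h, if_false]
      have := csmall_nonneg k
      exact mul_le_mul_of_nonneg_left (max_le (by linarith) ht0) (csmall_nonneg k)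
  have hβval : ∑' k, β k = (1/2:ℝ)^m * t := by
    rw [← Summable.sum_add_tsum_nat_add m hβsum]
    have h1 : ∑ k ∈ Finset.range m, β k = 0 := by
      apply Finset.sum_eq_zero
      intro k hk
      simp [hβ, Finset.mem_range.mp hk]
    have h2 : ∀ k : ℕ, β (k + m) = (1/2:ℝ)^m * (csmall k * t) := by
      intro k
      have : ¬ (k + m < m) := by omega
      simp only [hβ, this, if_false]
      unfold csmall
      rw [show k + m + 1 = (k+1) + m by ring, pow_add]
      ring
    rw [h1, zero_add]
    calc ∑' k, β (k + m) = ∑' k, (1/2:ℝ)^m * (csmall k * t) := tsum_congr h2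
      _ = (1/2:ℝ)^m * ∑' k, (csmall k * t) := tsum_mul_left
      _ = (1/2:ℝ)^m * t := by rw [tsum_mul_right, tsum_csmall, one_mul]
  linarith [hβval ▸ hle]

lemma hingeSum_small_pos {t : ℝ} (ht : 0 < t) : 0 < hingeSum csmall csmall t := by
  obtain ⟨k, hk⟩ := exists_pow_lt_of_lt_one ht (by norm_num : (1/2:ℝ) < 1)
  have hck : csmall k < t := by
    have : (1/2:ℝ)^(k+1) ≤ (1/2)^k := pow_le_pow_of_le_one (by norm_num) (by norm_num) (by omega)
    unfold csmall
    linarith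
  have hterm : 0 < csmall k * max (t - csmall k) 0 := by
    rw [max_eq_left (by linarith)]
    have : (0:ℝ) < csmall k := by unfold csmall; positivity
    nlinarith
  calc (0:ℝ) < csmall k * max (t - csmall k) 0 := hterm
    _ ≤ hingeSum csmall csmall t := by
      apply Summable.le_tsum (hingeSum_small_summable t) k
      intro j _
      exact mul_nonneg (csmall_nonneg j) (le_max_right _ _)

/-- lintegral of a hinge sum expands as a sum -/
lemma lintegral_hingeSum (c b : ℕ → ℝ) (hc : ∀ n, 0 ≤ c n)
    (hsum : ∀ x : ℝ, Summable fun n => c n * max (x - b n) 0)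
    (h : ℝ → ℝ) (hm : AEMeasurable h (volume.restrict (Ioo (0:ℝ) 1))) :
    ∫⁻ x in Ioo (0:ℝ) 1, ENNReal.ofReal (hingeSum c b |h x|) =
      ∑' n, ENNReal.ofReal (c n) *
        ∫⁻ x in Ioo (0:ℝ) 1, ENNReal.ofReal (max (|h x| - b n) 0) := by
  have hpt : ∀ x : ℝ, ENNReal.ofReal (hingeSum c b |h x|)
      = ∑' n, ENNReal.ofReal (c n) * ENNReal.ofReal (max (|h x| - b n) 0) := by
    intro x
    unfold hingeSum
    rw [ENNReal.ofReal_tsum_of_nonneg (fun n => mul_nonneg (hc n) (le_max_right _ _)) (hsum _)]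
    apply tsum_congr
    intro n
    exact ENNReal.ofReal_mul (hc n)
  calc ∫⁻ x in Ioo (0:ℝ) 1, ENNReal.ofReal (hingeSum c b |h x|)
      = ∫⁻ x in Ioo (0:ℝ) 1, ∑' n, ENNReal.ofReal (c n) *
          ENNReal.ofReal (max (|h x| - b n) 0) := by
        apply lintegral_congr
        intro x
        exact hpt x
    _ = ∑' n, ∫⁻ x in Ioo (0:ℝ) 1, ENNReal.ofReal (c n) *
          ENNReal.ofReal (max (|h x| - b n) 0) := by
        apply lintegral_tsum
        intro n
        apply AEMeasurable.const_mul
        exact (ENNReal.measurable_ofReal.comp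
          ((measurable_abs.sub measurable_const).max measurable_const)).comp_aemeasurable hm
    _ = ∑' n, ENNReal.ofReal (c n) *
          ∫⁻ x in Ioo (0:ℝ) 1, ENNReal.ofReal (max (|h x| - b n) 0) := by
        apply tsum_congr
        intro n
        exact lintegral_const_mul' _ _ ENNReal.ofReal_ne_top

noncomputable def Tint (h : ℝ → ℝ) (a : ℝ) : ENNReal :=
  ∫⁻ x in Ioo (0:ℝ) 1, ENNReal.ofReal (max (|h x| - a) 0)

lemma key_T {f g : ℝ → ℝ}
    (hf : AEMeasurable f (volume.restrict (Ioo (0:ℝ) 1)))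
    (hg : AEMeasurable g (volume.restrict (Ioo (0:ℝ) 1)))
    (hsub : ∀ t ∈ Ioc (0:ℝ) 1,
      ∫⁻ s in Ioo (0:ℝ) t, ENNReal.ofReal (mu01 f s) ≤
        ∫⁻ s in Ioo (0:ℝ) t, ENNReal.ofReal (mu01 g s))
    {a : ℝ} (ha : 0 ≤ a) : Tint f a ≤ Tint g a := by
  set f' := hf.mk f with hf'def
  set g' := hg.mk g with hg'def
  have hf'm : Measurable f' := hf.measurable_mk
  have hg'm : Measurable g' := hg.measurable_mk
  have hfe : f =ᵐ[volume.restrict (Ioo (0:ℝ) 1)] f' := hf.ae_eq_mk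
  have hge : g =ᵐ[volume.restrict (Ioo (0:ℝ) 1)] g' := hg.ae_eq_mk
  have hmuf : mu01 f = mu01 f' := mu01_congr hfe
  have hmug : mu01 g = mu01 g' := mu01_congr hge
  have hsub' : ∀ t ∈ Ioc (0:ℝ) 1,
      ∫⁻ s in Ioo (0:ℝ) t, ENNReal.ofReal (mu01 f' s) ≤
        ∫⁻ s in Ioo (0:ℝ) t, ENNReal.ofReal (mu01 g' s) := by
    intro t ht
    rw [← hmuf, ← hmug]
    exact hsub t ht
  have e1 : Tint f a = Tint f' a := by
    unfold Tint
    apply lintegral_congr_ae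
    filter_upwards [hfe] with x hx
    rw [hx]
  have e2 : Tint g a = Tint g' a := by
    unfold Tint
    apply lintegral_congr_ae
    filter_upwards [hge] with x hx
    rw [hx]
  rw [e1, e2]
  unfold Tint
  rw [T_eq hf'm ha, T_eq hg'm ha]
  exact maj hf'm hsub' ha

/-- Tint tends to zero along ℕ for an integrable function. -/
lemma Tint_tendsto {g : ℝ → ℝ} (hm : AEMeasurable g (volume.restrict (Ioo (0:ℝ) 1)))
    (hfin : ∫⁻ x in Ioo (0:ℝ) 1, ENNReal.ofReal |g x| ≠ ⊤) :
    Tendsto (fun n : ℕ => Tint g n) atTop (𝓝 0) := by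
  have h0 : (0:ENNReal) = ∫⁻ x in Ioo (0:ℝ) 1, (0:ENNReal) := by simp
  rw [h0]
  apply tendsto_lintegral_of_dominated_convergence' (fun x => ENNReal.ofReal |g x|)
  · intro n
    exact (ENNReal.measurable_ofReal.comp
      ((measurable_abs.sub measurable_const).max measurable_const)).comp_aemeasurable hm
  · intro n
    apply Filter.Eventually.of_forall
    intro x
    apply ENNReal.ofReal_le_ofReal
    refine max_le ?_ (abs_nonneg _)
    have : (0:ℝ) ≤ n := Nat.cast_nonneg n
    linarith
  · exact hfin
  · apply Filter.Eventually.of_forall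
    intro x
    have : ∀ᶠ n : ℕ in atTop, ENNReal.ofReal (max (|g x| - n) 0) = 0 := by
      obtain ⟨m, hm'⟩ := exists_nat_ge |g x|
      filter_upwards [eventually_ge_atTop m] with n hn
      have : |g x| ≤ n := le_trans hm' (by exact_mod_cast hn)
      rw [max_eq_right (by linarith), ENNReal.ofReal_zero]
    exact Tendsto.congr' (by filter_upwards [this] with n hn; rw [hn]) tendsto_const_nhds

/-- choice of thresholds -/
lemma exists_aseq {g : ℝ → ℝ} (hm : AEMeasurable g (volume.restrict (Ioo (0:ℝ) 1)))
    (hfin : ∫⁻ x in Ioo (0:ℝ) 1, ENNReal.ofReal |g x| ≠ ⊤) :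
    ∃ a : ℕ → ℕ, Monotone a ∧ (∀ n, n + 1 ≤ a n) ∧
      (∀ n, Tint g (a n) ≤ (2⁻¹ : ENNReal) ^ n) := by
  have hT := Tint_tendsto hm hfin
  have hN : ∀ k : ℕ, ∃ M : ℕ, ∀ m : ℕ, m ≥ M → Tint g m ≤ (2⁻¹ : ENNReal) ^ k := by
    intro k
    have hpos : (0:ENNReal) < (2⁻¹ : ENNReal) ^ k := by
      apply ENNReal.pow_pos
      norm_num
    have := hT.eventually (gt_mem_nhds hpos)
    rw [eventually_atTop] at this
    obtain ⟨M, hM⟩ := this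
    exact ⟨M, fun m hm' => le_of_lt (hM m hm')⟩
  choose N hNspec using hN
  refine ⟨fun n => n + 1 + ∑ k ∈ Finset.range (n+1), N k, ?_, ?_, ?_⟩
  · intro m n hmn
    have : ∑ k ∈ Finset.range (m+1), N k ≤ ∑ k ∈ Finset.range (n+1), N k :=
      Finset.sum_le_sum_of_subset (Finset.range_subset_range.mpr (by omega))
    dsimp only
    omega
  · intro n; dsimp only; omega
  · intro n
    dsimp only
    apply hNspec n
    have : N n ≤ ∑ k ∈ Finset.range (n+1), N k :=
      Finset.single_le_sum (fun k _ => Nat.zero_le _) (Finset.self_mem_range_succ n)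
    omega

lemma hingeSum_small_lipschitz : LipschitzWith 1 (hingeSum csmall csmall) := by
  apply LipschitzWith.of_dist_le_mul
  intro x y
  rw [Real.dist_eq, Real.dist_eq, NNReal.coe_one, one_mul]
  have hsx := hingeSum_small_summable x
  have hsy := hingeSum_small_summable y
  have hdiff : ∀ k : ℕ, |csmall k * max (x - csmall k) 0 - csmall k * max (y - csmall k) 0|
      ≤ csmall k * |x - y| := by
    intro k
    rw [← mul_sub, abs_mul, abs_of_nonneg (csmall_nonneg k)]
    apply mul_le_mul_of_nonneg_left _ (csmall_nonneg k)
    calc |max (x - csmall k) 0 - max (y - csmall k) 0| ≤ |(x - csmall k) - (y - csmall k)| :=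
          abs_max_sub_max_le_abs _ _ _
      _ = |x - y| := by ring_nf
  have hsub : Summable (fun k => |csmall k * max (x - csmall k) 0
      - csmall k * max (y - csmall k) 0|) := by
    apply Summable.of_nonneg_of_le (fun k => abs_nonneg _) hdiff
      (csmall_summable.mul_right _)
  calc |hingeSum csmall csmall x - hingeSum csmall csmall y|
      = |∑' k, (csmall k * max (x - csmall k) 0 - csmall k * max (y - csmall k) 0)| := by
        rw [Summable.tsum_sub hsx hsy]; rfl
    _ ≤ ∑' k, |csmall k * max (x - csmall k) 0 - csmall k * max (y - csmall k) 0| := by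
        have := norm_tsum_le_tsum_norm (f := fun k => csmall k * max (x - csmall k) 0
          - csmall k * max (y - csmall k) 0) (by simpa [Real.norm_eq_abs] using hsub)
        simpa [Real.norm_eq_abs] using this
    _ ≤ ∑' k, csmall k * |x - y| := Summable.tsum_le_tsum hdiff hsub (csmall_summable.mul_right _)
    _ = |x - y| := by rw [tsum_mul_right, tsum_csmall, one_mul]

lemma hingeSum_zero_of_le {c b : ℕ → ℝ} (hb1 : ∀ n, (1:ℝ) ≤ b n) {t : ℝ} (ht : t ≤ 1) :
    hingeSum c b t = 0 := by
  unfold hingeSum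
  have : ∀ n : ℕ, c n * max (t - b n) 0 = 0 := by
    intro n
    rw [max_eq_right (by linarith [hb1 n]), mul_zero]
  simp only [this, tsum_zero]

lemma hingeSum_atTop {b : ℕ → ℝ} (hmono : Monotone b) (hb1 : ∀ n : ℕ, ((n:ℝ) + 1) ≤ b n)
    {Gs : ℝ → ℝ} (hGs : ∀ t, 0 ≤ Gs t) :
    Tendsto (fun t => (Gs t + hingeSum (fun _ => (1:ℝ)) b t) / t) atTop atTop := by
  rw [tendsto_atTop]
  intro C
  obtain ⟨N, hN⟩ := exists_nat_ge (2 * C)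
  filter_upwards [eventually_ge_atTop (max 1 (2 * b N))] with t ht
  have ht1 : (1:ℝ) ≤ t := le_trans (le_max_left _ _) ht
  have ht0 : (0:ℝ) < t := by linarith
  have htb : 2 * b N ≤ t := le_trans (le_max_right _ _) ht
  have hbN0 : (0:ℝ) ≤ b N := by linarith [hb1 N, Nat.cast_nonneg N (α := ℝ)]
  have hterm : ∀ n ∈ Finset.range (N+1), t / 2 ≤ (fun _ => (1:ℝ)) n * max (t - b n) 0 := by
    intro n hn
    have hbn : b n ≤ b N := hmono (Nat.lt_succ_iff.mp (Finset.mem_range.mp hn))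
    have h1 : t / 2 ≤ t - b n := by linarith
    rw [one_mul]
    calc t/2 ≤ t - b n := h1
      _ ≤ max (t - b n) 0 := le_max_left _ _
  have hsum := hingeSum_summable_of_lb (c := fun _ => (1:ℝ)) hb1 t
  have hlow : ((N:ℝ)+1) * (t/2) ≤ hingeSum (fun _ => (1:ℝ)) b t := by
    calc ((N:ℝ)+1) * (t/2) = ∑ n ∈ Finset.range (N+1), (t/2) := by
          rw [Finset.sum_const, Finset.card_range]
          push_cast
          ring
      _ ≤ ∑ n ∈ Finset.range (N+1), (fun _ => (1:ℝ)) n * max (t - b n) 0 :=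
          Finset.sum_le_sum hterm
      _ ≤ hingeSum (fun _ => (1:ℝ)) b t := by
          apply Summable.sum_le_tsum _ _ hsum
          intro n _
          rw [one_mul]
          exact le_max_right _ _
  rw [le_div_iff₀ ht0]
  have : C * t ≤ ((N:ℝ)+1) * (t/2) := by nlinarith
  linarith [hGs t]

theorem stmt19 (g : ℝ → ℝ) (hg0 : ∀ x ∈ Ioo (0:ℝ) 1, 0 < g x)
    (hgi : IntegrableOn g (Ioo 0 1) volume) :
    ∃ G : ℝ → ℝ, IsNFunction G ∧ Tendsto (fun t => G t / t) atTop atTop ∧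
      (∫⁻ s in Ioo (0:ℝ) 1, ENNReal.ofReal (G (g s))) < ⊤ ∧
      ∀ f : ℝ → ℝ, IntegrableOn f (Ioo 0 1) volume → Submaj01 f g →
        ∫⁻ s in Ioo (0:ℝ) 1, ENNReal.ofReal (G |f s|) ≤
          ∫⁻ s in Ioo (0:ℝ) 1, ENNReal.ofReal (G (g s)) := by
  have hgm : AEMeasurable g (volume.restrict (Ioo (0:ℝ) 1)) := hgi.aemeasurable
  -- finiteness of ∫ |g|
  have hCg : (∫⁻ x in Ioo (0:ℝ) 1, ENNReal.ofReal |g x|) < ⊤ := by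
    have heq : ∀ x : ℝ, ENNReal.ofReal |g x| = ‖g x‖ₑ := by
      intro x
      rw [← Real.norm_eq_abs, ofReal_norm_eq_enorm]
    calc ∫⁻ x in Ioo (0:ℝ) 1, ENNReal.ofReal |g x|
        = ∫⁻ x in Ioo (0:ℝ) 1, ‖g x‖ₑ := lintegral_congr (fun x => heq x)
      _ < ⊤ := hgi.2
  set Cg := ∫⁻ x in Ioo (0:ℝ) 1, ENNReal.ofReal |g x| with hCgdef
  obtain ⟨A, hAmono, hA1, hAT⟩ := exists_aseq hgm hCg.ne
  set bB : ℕ → ℝ := fun n => (A n : ℝ) with hbBdef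
  have hbB1 : ∀ n : ℕ, ((n:ℝ) + 1) ≤ bB n := by
    intro n
    have := hA1 n
    simp only [hbBdef]
    exact_mod_cast this
  have hbBmono : Monotone bB := fun m n hmn => by simp only [hbBdef]; exact_mod_cast hAmono hmn
  have hbBnn : ∀ n, (0:ℝ) ≤ bB n := fun n => le_trans (by positivity) (hbB1 n)
  have hbBge1 : ∀ n, (1:ℝ) ≤ bB n := fun n =>
    le_trans (by linarith [Nat.cast_nonneg n (α := ℝ)]) (hbB1 n)
  set Gs : ℝ → ℝ := hingeSum csmall csmall with hGsdef
  set Gb : ℝ → ℝ := hingeSum (fun _ => (1:ℝ)) bB with hGbdef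
  have hcB : ∀ n : ℕ, (0:ℝ) ≤ (fun _ => (1:ℝ)) n := fun n => by norm_num
  have hsumB := fun x => hingeSum_summable_of_lb (c := fun _ => (1:ℝ)) hbB1 x
  have hGsnn : ∀ t, 0 ≤ Gs t := fun t => hingeSum_nonneg csmall_nonneg t
  have hGbnn : ∀ t, 0 ≤ Gb t := fun t => hingeSum_nonneg hcB t
  refine ⟨fun t => Gs t + Gb t, ?_, ?_, ?_, ?_⟩
  · -- IsNFunction
    refine ⟨?_, ?_, ?_, ?_, ?_, ?_, ?_⟩
    · exact (hingeSum_small_lipschitz.continuous.add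
        (hingeSum_continuous_of_lb hbB1)).continuousOn
    · exact ((hingeSum_convexOn csmall_nonneg hingeSum_small_summable).add
        (hingeSum_convexOn hcB hsumB)).subset (subset_univ _) (convex_Ici 0)
    · exact fun t _ => add_nonneg (hGsnn t) (hGbnn t)
    · show Gs 0 + Gb 0 = 0
      rw [hGsdef, hGbdef]
      rw [hingeSum_zero csmall_nonneg, hingeSum_zero hbBnn, add_zero]
    · intro t ht
      show 0 < Gs t + Gb t
      have h1 : 0 < Gs t := hingeSum_small_pos ht
      have h2 := hGbnn t
      linarith
    · -- limit at 0+
      rw [Metric.tendsto_nhdsWithin_nhds]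
      intro ε hε
      obtain ⟨m, hm⟩ := exists_pow_lt_of_lt_one hε (by norm_num : (1/2:ℝ) < 1)
      refine ⟨min ((1/2:ℝ)^m) 1, by positivity, ?_⟩
      intro t ht hd
      show dist ((Gs t + Gb t) / t) 0 < ε
      have ht0 : 0 < t := ht
      rw [Real.dist_eq, sub_zero, abs_of_pos ht0] at hd
      have htm : t ≤ (1/2:ℝ)^m := le_of_lt (lt_of_lt_of_le hd (min_le_left _ _))
      have ht1 : t ≤ 1 := le_of_lt (lt_of_lt_of_le hd (min_le_right _ _))
      have hGb0 : Gb t = 0 := hingeSum_zero_of_le hbBge1 ht1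
      have hGsle : Gs t ≤ (1/2:ℝ)^m * t := hingeSum_small_le m (le_of_lt ht0) htm
      rw [Real.dist_eq, sub_zero]
      have hnn : 0 ≤ (Gs t + Gb t) / t := div_nonneg (by linarith [hGsnn t, hGbnn t]) ht0.le
      rw [abs_of_nonneg hnn, hGb0, add_zero]
      calc Gs t / t ≤ (1/2:ℝ)^m := by
            rw [div_le_iff₀ ht0]
            linarith
        _ < ε := hm
    · exact hingeSum_atTop hbBmono hbB1 hGsnn
  · exact hingeSum_atTop hbBmono hbB1 hGsnn
  all_goals {
    have lint_G : ∀ (h : ℝ → ℝ), AEMeasurable h (volume.restrict (Ioo (0:ℝ) 1)) →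
        (∫⁻ x in Ioo (0:ℝ) 1, ENNReal.ofReal (Gs |h x| + Gb |h x|)) =
          (∑' n, ENNReal.ofReal (csmall n) * Tint h (csmall n)) +
          ∑' n, ENNReal.ofReal ((1:ℝ)) * Tint h (bB n) := by
      intro h hm
      have hpt : ∀ x : ℝ, ENNReal.ofReal (Gs |h x| + Gb |h x|)
          = ENNReal.ofReal (Gs |h x|) + ENNReal.ofReal (Gb |h x|) :=
        fun x => ENNReal.ofReal_add (hGsnn _) (hGbnn _)
      rw [lintegral_congr (fun x => hpt x), lintegral_add_left']
      · rw [hGsdef, hGbdef, lintegral_hingeSum csmall csmall csmall_nonneg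
          hingeSum_small_summable h hm, lintegral_hingeSum (fun _ => (1:ℝ)) bB hcB hsumB h hm]
        rfl
      · exact (ENNReal.measurable_ofReal.comp
          ((hingeSum_small_lipschitz.continuous.measurable).comp measurable_abs)
          ).comp_aemeasurable hm
    have hg_abs : (∫⁻ s in Ioo (0:ℝ) 1, ENNReal.ofReal (Gs (g s) + Gb (g s)))
        = ∫⁻ x in Ioo (0:ℝ) 1, ENNReal.ofReal (Gs |g x| + Gb |g x|) := by
      apply setLIntegral_congr_fun measurableSet_Ioo
      intro s hs
      dsimp only
      rw [abs_of_pos (hg0 s hs)]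
    have hS1top : (∑' n, ENNReal.ofReal (csmall n) * Tint g (csmall n)) ≤ Cg := by
      have hTle : ∀ n : ℕ, Tint g (csmall n) ≤ Cg := by
        intro n
        unfold Tint
        apply lintegral_mono
        intro x
        apply ENNReal.ofReal_le_ofReal
        exact max_le (by linarith [csmall_nonneg n]) (abs_nonneg _)
      calc (∑' n, ENNReal.ofReal (csmall n) * Tint g (csmall n))
          ≤ ∑' n, ENNReal.ofReal (csmall n) * Cg :=
            ENNReal.tsum_le_tsum (fun n => mul_le_mul_right (hTle n) _)
        _ = (∑' n, ENNReal.ofReal (csmall n)) * Cg := ENNReal.tsum_mul_right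
        _ = Cg := by
            rw [← ENNReal.ofReal_tsum_of_nonneg csmall_nonneg csmall_summable,
              tsum_csmall, ENNReal.ofReal_one, one_mul]
    have hS2top : (∑' n, ENNReal.ofReal ((1:ℝ)) * Tint g (bB n)) < ⊤ := by
      have hhalf : (2⁻¹:ENNReal) < 1 := ENNReal.inv_lt_one.mpr (by norm_num)
      calc (∑' n, ENNReal.ofReal ((1:ℝ)) * Tint g (bB n))
          = ∑' n, Tint g (bB n) := by
            apply tsum_congr
            intro n
            rw [ENNReal.ofReal_one, one_mul]
        _ ≤ ∑' n : ℕ, (2⁻¹:ENNReal)^n := ENNReal.tsum_le_tsum (fun n => hAT n)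
        _ = (1 - 2⁻¹)⁻¹ := ENNReal.tsum_geometric _
        _ < ⊤ := ENNReal.inv_lt_top.mpr (tsub_pos_of_lt hhalf)
    first
    | -- finiteness goal
      (show (∫⁻ s in Ioo (0:ℝ) 1, ENNReal.ofReal (Gs (g s) + Gb (g s))) < ⊤
       rw [hg_abs, lint_G g hgm]
       exact lt_of_le_of_lt (add_le_add_left hS1top _)
         (ENNReal.add_lt_top.mpr ⟨hCg, hS2top⟩))
    | -- main inequality
      (intro f hf hsub
       have hfm : AEMeasurable f (volume.restrict (Ioo (0:ℝ) 1)) := hf.aemeasurable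
       show (∫⁻ s in Ioo (0:ℝ) 1, ENNReal.ofReal (Gs |f s| + Gb |f s|))
         ≤ ∫⁻ s in Ioo (0:ℝ) 1, ENNReal.ofReal (Gs (g s) + Gb (g s))
       rw [hg_abs, lint_G f hfm, lint_G g hgm]
       apply add_le_add
       · exact ENNReal.tsum_le_tsum (fun n =>
           mul_le_mul_right (key_T hfm hgm hsub (csmall_nonneg n)) _)
       · exact ENNReal.tsum_le_tsum (fun n =>
           mul_le_mul_right (key_T hfm hgm hsub (hbBnn n)) _)) }
end
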